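/- arXiv:2411.00207 — 5 statements merged into one kernel-verified Lean document; each statement's English description precedes it below -/
import Mathlib

section
/- Let D be a triangulated category with a t-structure whose heart is H, and let (T, F) be a torsion pair on H. Then the full subcategory F[1] * T (objects E fitting into a triangle F' [1] → E → T' with F' ∈ F and T' ∈ T) is the heart of a t-structure on D (the HRS forward tilt of H at (T,F)). -/
open CategoryTheory CategoryTheory.Limits CategoryTheory.Pretriangulated
  CategoryTheory.Triangulated ZeroObject

namespace Paper

universe w w' v u v₁ u₁ v₂ u₂ v₃ u₃ v₄ u₄

section AbelianPrelim

variable {C : Type u} [Category.{v} C]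

/-- A Serre subcategory of an abelian category, as a predicate on objects:
closed under zero, isomorphisms, and for every short exact sequence the middle
term belongs to it iff the outer terms do (subobjects, quotients, extensions). -/
structure IsSerre [Abelian C] (P : C → Prop) : Prop where
  zero : ∀ X : C, IsZero X → P X
  iso_closed : ∀ {X Y : C}, (X ≅ Y) → P X → P Y
  ses : ∀ S : ShortComplex C, S.ShortExact → (P S.X₂ ↔ P S.X₁ ∧ P S.X₃)

/-- A torsion pair `(T, F)` on an abelian category: `Hom(T,F) = 0` and every object
is an extension of a torsion-free object by a torsion object. -/
structure IsTorsionPair [Abelian C] (T F : C → Prop) : Prop where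
  t_iso : ∀ {X Y : C}, (X ≅ Y) → T X → T Y
  f_iso : ∀ {X Y : C}, (X ≅ Y) → F X → F Y
  hom_zero : ∀ {X Y : C}, T X → F Y → ∀ f : X ⟶ Y, f = 0
  exists_ses : ∀ X : C, ∃ (A B : C) (f : A ⟶ X) (g : X ⟶ B) (w : f ≫ g = 0),
    T A ∧ F B ∧ (ShortComplex.mk f g w).ShortExact

end AbelianPrelim

/-- Essential image of a functor, as a predicate. -/
def EssIm {C : Type u} [Category.{v} C] {D : Type u₁} [Category.{v₁} D]
    (F : C ⥤ D) (Y : D) : Prop := ∃ X : C, Nonempty (F.obj X ≅ Y)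

/-- Essential image of a subcategory (predicate) under a functor. -/
def ImP {C : Type u} [Category.{v} C] {D : Type u₁} [Category.{v₁} D]
    (F : C ⥤ D) (P : C → Prop) (Y : D) : Prop := ∃ X : C, P X ∧ Nonempty (F.obj X ≅ Y)

/-- A recollement `R(A', A, A'')`: adjoint triples `(q, ι, p)` and `(l, π, r)`,
with `ι, l, r` fully faithful and `Im ι = Ker π`. -/
structure RecollementData (A' : Type u) (A : Type u₁) (A'' : Type u₂)
    [Category.{v} A'] [Category.{v₁} A] [Category.{v₂} A''] where
  ι : A' ⥤ A
  π : A ⥤ A''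
  q : A ⥤ A'
  p : A ⥤ A'
  l : A'' ⥤ A
  r : A'' ⥤ A
  adj_q : q ⊣ ι
  adj_p : ι ⊣ p
  adj_l : l ⊣ π
  adj_r : π ⊣ r
  ι_full : ι.Full
  ι_faithful : ι.Faithful
  l_full : l.Full
  l_faithful : l.Faithful
  r_full : r.Full
  r_faithful : r.Faithful
  im_eq_ker : ∀ X : A, EssIm ι X ↔ IsZero (π.obj X)

section TriPrelim

variable {D : Type u} [Category.{v} D] [Preadditive D] [HasZeroObject D] [HasShift D ℤ]
  [∀ n : ℤ, (shiftFunctor D n).Additive] [Pretriangulated D]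

/-- The heart of a t-structure, as a predicate on objects. -/
def heartP (t : TStructure D) (X : D) : Prop := t.le 0 X ∧ t.ge 0 X

/-- Boundedness of a t-structure. -/
def IsBoundedT (t : TStructure D) : Prop := ∀ X : D, ∃ a b : ℤ, t.le b X ∧ t.ge a X

/-- A simple object of the abelian subquotient determined by the heart-like
predicate `H`: any "short exact sequence" in `H` (i.e. distinguished triangle
with all terms in `H`) with middle term `X` is trivial. -/
def SimpleIn (H : D → Prop) (X : D) : Prop :=
  H X ∧ ¬ IsZero X ∧ ∀ (A B : D) (f : A ⟶ X) (g : X ⟶ B) (h : B ⟶ A⟦(1 : ℤ)⟧),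
    H A → H B → Triangle.mk f g h ∈ (distTriang D) → IsZero A ∨ IsZero B

/-- A torsion pair `(T, F)` on the heart-like predicate `H` of a triangulated
category, where short exact sequences in `H` are distinguished triangles. -/
structure TorsionPairIn (H T F : D → Prop) : Prop where
  t_sub : ∀ X : D, T X → H X
  f_sub : ∀ X : D, F X → H X
  t_iso : ∀ {X Y : D}, (X ≅ Y) → T X → T Y
  f_iso : ∀ {X Y : D}, (X ≅ Y) → F X → F Y
  hom_zero : ∀ {X Y : D}, T X → F Y → ∀ f : X ⟶ Y, f = 0
  exists_triangle : ∀ X : D, H X → ∃ (A B : D) (f : A ⟶ X) (g : X ⟶ B)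
    (h : B ⟶ A⟦(1 : ℤ)⟧), T A ∧ F B ∧ Triangle.mk f g h ∈ distTriang D

/-- The forward HRS tilt `F[1] * T` of a heart at a torsion pair `(T, F)`. -/
def TiltSharp (T F : D → Prop) (E : D) : Prop :=
  ∃ (A B : D) (f : A⟦(1 : ℤ)⟧ ⟶ E) (g : E ⟶ B) (h : B ⟶ A⟦(1 : ℤ)⟧⟦(1 : ℤ)⟧),
    F A ∧ T B ∧ Triangle.mk f g h ∈ distTriang D

/-- The backward HRS tilt `F * T[-1]` of a heart at a torsion pair `(T, F)`. -/
def TiltFlat (T F : D → Prop) (E : D) : Prop :=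
  ∃ (A B : D) (f : A ⟶ E) (g : E ⟶ B⟦(-1 : ℤ)⟧) (h : B⟦(-1 : ℤ)⟧ ⟶ A⟦(1 : ℤ)⟧),
    F A ∧ T B ∧ Triangle.mk f g h ∈ distTriang D

/-- `P` is a Serre subcategory of the heart-like predicate `H`, where short
exact sequences in `H` are distinguished triangles with all terms in `H`. -/
def SerreIn (H P : D → Prop) : Prop :=
  (∀ X : D, P X → H X) ∧ (∀ X : D, IsZero X → H X → P X) ∧
  (∀ {X Y : D}, (X ≅ Y) → P X → P Y) ∧
  ∀ (A E B : D) (f : A ⟶ E) (g : E ⟶ B) (h : B ⟶ A⟦(1 : ℤ)⟧),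
    H A → H E → H B → Triangle.mk f g h ∈ (distTriang D) → (P E ↔ P A ∧ P B)

/-- A thick (triangulated, closed under retracts) subcategory, as a predicate. -/
structure IsThick (V : D → Prop) : Prop where
  zero : ∀ X : D, IsZero X → V X
  iso : ∀ {X Y : D}, (X ≅ Y) → V X → V Y
  shift : ∀ (X : D) (n : ℤ), V X → V (X⟦n⟧)
  ext : ∀ (A E B : D) (f : A ⟶ E) (g : E ⟶ B) (h : B ⟶ A⟦(1 : ℤ)⟧),
    Triangle.mk f g h ∈ (distTriang D) → V A → V B → V E
  retract : ∀ (X Z : D) (i : X ⟶ Z) (p : Z ⟶ X), i ≫ p = 𝟙 X → V Z → V X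

/-- The t-structure `t` restricts to the subcategory `V`: truncation triangles of
objects of `V` may be chosen inside `V`. -/
def RestrictsTo (t : TStructure D) (V : D → Prop) : Prop :=
  ∀ A : D, V A → ∃ (X Y : D), t.le 0 X ∧ t.ge 1 Y ∧ V X ∧ V Y ∧
    ∃ (f : X ⟶ A) (g : A ⟶ Y) (h : Y ⟶ X⟦(1 : ℤ)⟧), Triangle.mk f g h ∈ distTriang D

/-- A bounded heart `heartP t` is compatible with `V`: the t-structure restricts to
`V` (so that `heartP t ∩ V` is a bounded heart of `V`) and `heartP t ∩ V` is a
Serre subcategory of `heartP t`. -/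
def CompatibleWith (t : TStructure D) (V : D → Prop) : Prop :=
  RestrictsTo t V ∧ SerreIn (heartP t) (fun X => heartP t X ∧ V X)

/-- Finite length objects of the heart-like predicate `H`: finite iterated
extensions of simple objects of `H`. -/
inductive FinLength (H : D → Prop) : D → Prop
  | zero (X : D) : IsZero X → FinLength H X
  | step (A X B : D) (f : A ⟶ X) (g : X ⟶ B) (h : B ⟶ A⟦(1 : ℤ)⟧) :
      SimpleIn H B → Triangle.mk f g h ∈ (distTriang D) → FinLength H A → FinLength H X

/-- The heart of `t` is a finite (length, with finitely many simples) abelian category. -/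
def FiniteHeart (t : TStructure D) : Prop :=
  (∃ (n : ℕ) (Sim : Fin n → D), ∀ X : D, SimpleIn (heartP t) X → ∃ i, Nonempty (X ≅ Sim i)) ∧
  ∀ X : D, heartP t X → FinLength (heartP t) X

/-- The additive closure (finite direct sums, retracts) of a class of objects. -/
inductive AddClos [HasBinaryBiproducts D] (S : D → Prop) : D → Prop
  | of (X : D) : S X → AddClos S X
  | zero (X : D) : IsZero X → AddClos S X
  | biprod (X Y : D) : AddClos S X → AddClos S Y → AddClos S (X ⊞ Y)
  | retract (X Z : D) (i : X ⟶ Z) (p : Z ⟶ X) : i ≫ p = 𝟙 X → AddClos S Z → AddClos S X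

/-- The class `⟨S⟩` generated by an object `S`: extensions of `Add S` by `Add S`. -/
def GenBy [HasBinaryBiproducts D] (S : D) (X : D) : Prop :=
  ∃ (A B : D) (f : A ⟶ X) (g : X ⟶ B) (h : B ⟶ A⟦(1 : ℤ)⟧),
    AddClos (fun Z => Z = S) A ∧ AddClos (fun Z => Z = S) B ∧
    Triangle.mk f g h ∈ distTriang D

/-- `t'` is the simple forward HRS tilt of `t` at the simple object `S` of its heart. -/
def SimpleForwardTiltRel [HasBinaryBiproducts D] (t t' : TStructure D) (S : D) : Prop :=
  SimpleIn (heartP t) S ∧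
  ∃ T : D → Prop, TorsionPairIn (heartP t) T (GenBy S) ∧
    ∀ X : D, heartP t' X ↔ TiltSharp T (GenBy S) X

/-- The thick closure of a class of objects. -/
inductive ThickClos (S : D → Prop) : D → Prop
  | of (X : D) : S X → ThickClos S X
  | zero (X : D) : IsZero X → ThickClos S X
  | shift (X : D) (n : ℤ) : ThickClos S X → ThickClos S (X⟦n⟧)
  | ext (A E B : D) (f : A ⟶ E) (g : E ⟶ B) (h : B ⟶ A⟦(1 : ℤ)⟧) :
      Triangle.mk f g h ∈ (distTriang D) → ThickClos S A → ThickClos S B → ThickClos S E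
  | retract (X Z : D) (i : X ⟶ Z) (p : Z ⟶ X) : i ≫ p = 𝟙 X → ThickClos S Z → ThickClos S X

/-- `π : D ⥤ Q` realizes `Q` as the Verdier quotient of `D` by the thick
subcategory `V`. -/
structure IsVerdierQuotient {Q : Type u₁} [Category.{v₁} Q] [Preadditive Q]
    [HasZeroObject Q] [HasShift Q ℤ] [∀ n : ℤ, (shiftFunctor Q n).Additive]
    [Pretriangulated Q] (π : D ⥤ Q) (V : D → Prop) : Prop where
  essSurj : ∀ Y : Q, ∃ X : D, Nonempty (π.obj X ≅ Y)
  kernel : ∀ X : D, IsZero (π.obj X) ↔ V X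
  inverts : ∀ (X Y : D) (f : X ⟶ Y) (Z : D) (g : Y ⟶ Z) (h : Z ⟶ X⟦(1 : ℤ)⟧),
    Triangle.mk f g h ∈ (distTriang D) → V Z → IsIso (π.map f)

end TriPrelim

section TExact

variable {D : Type u} [Category.{v} D] [Preadditive D] [HasZeroObject D] [HasShift D ℤ]
  [∀ n : ℤ, (shiftFunctor D n).Additive] [Pretriangulated D]
  {E : Type u₁} [Category.{v₁} E] [Preadditive E] [HasZeroObject E] [HasShift E ℤ]
  [∀ n : ℤ, (shiftFunctor E n).Additive] [Pretriangulated E]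

/-- t-exactness of a functor with respect to t-structures on source and target. -/
def TExact (F : D ⥤ E) (t : TStructure D) (t' : TStructure E) : Prop :=
  (∀ X : D, t.le 0 X → t'.le 0 (F.obj X)) ∧ (∀ X : D, t.ge 0 X → t'.ge 0 (F.obj X))

end TExact

/-- An isomorphism of oriented graphs. -/
structure OGraphIso {V₁ : Type u} {V₂ : Type u₁}
    (E₁ : V₁ → V₁ → Prop) (E₂ : V₂ → V₂ → Prop) where
  toEquiv : V₁ ≃ V₂
  edge_iff : ∀ a b : V₁, E₁ a b ↔ E₂ (toEquiv a) (toEquiv b)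

end Paper

open Paper

universe v u

section HRSAux

variable {D : Type u} [Category.{v} D] [Preadditive D] [HasZeroObject D] [HasShift D ℤ]
  [∀ n : ℤ, (shiftFunctor D n).Additive] [Pretriangulated D]

namespace HRS

open CategoryTheory.Category CategoryTheory.Preadditive


variable (t : TStructure D)

lemma tzero {X Y : D} (f : X ⟶ Y) {n₀ n₁ : ℤ} (h : n₀ < n₁)
    (hX : t.le n₀ X) (hY : t.ge n₁ Y) : f = 0 := by
  have hX' : t.le 0 (X⟦n₀⟧) := t.le_shift n₀ n₀ 0 (add_zero n₀) X hX
  have hY' : t.ge (n₁ - n₀) (Y⟦n₀⟧) := t.ge_shift n₁ n₀ (n₁ - n₀) (by omega) Y hY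
  have hY'' : t.ge 1 (Y⟦n₀⟧) := t.ge_antitone (show (1:ℤ) ≤ n₁ - n₀ by omega) _ hY'
  have hz : (shiftFunctor D n₀).map f = 0 := t.zero' _ hX' hY''
  apply (shiftFunctor D n₀).map_injective
  rw [hz, CategoryTheory.Functor.map_zero]

lemma le_of_orth (n : ℤ) (X : D)
    (h : ∀ Z : D, t.ge (n+1) Z → ∀ f : X ⟶ Z, f = 0) : t.le n X := by
  obtain ⟨A, B, hA, hB, f, g, hco, mem⟩ := t.exists_triangle X n (n+1) (by omega)
  have hg : g = 0 := h B hB g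
  have hB0 : IsZero B := by
    obtain ⟨r, hr⟩ := Triangle.yoneda_exact₃ _ mem (𝟙 B)
      (by show g ≫ 𝟙 B = 0; rw [hg, zero_comp])
    have hr0 : r = 0 := tzero t r (show n - 1 < n + 1 by omega)
      (t.le_shift n 1 (n-1) (by omega) A hA) hB
    rw [IsZero.iff_id_eq_zero, hr, hr0, comp_zero]
    exact rfl
  have : IsIso f := (Triangle.isZero₃_iff_isIso₁ _ mem).1 hB0
  exact ObjectProperty.prop_of_iso (t.le n) (asIso f) hA

lemma ge_of_orth (n : ℤ) (X : D)
    (h : ∀ W : D, t.le (n-1) W → ∀ f : W ⟶ X, f = 0) : t.ge n X := by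
  obtain ⟨A, B, hA, hB, f, g, hco, mem⟩ := t.exists_triangle X (n-1) n (by omega)
  have hf : f = 0 := h A hA f
  have hA0 : IsZero A := by
    obtain ⟨r, hr⟩ := Triangle.coyoneda_exact₂ _ (inv_rot_of_distTriang _ mem) (𝟙 A)
      (show 𝟙 A ≫ f = 0 by rw [hf, comp_zero])
    have hr0 : r = 0 := tzero t r (show n - 1 < n + 1 by omega) hA
      (t.ge_shift n (-1) (n+1) (by omega) B hB)
    rw [IsZero.iff_id_eq_zero, hr, hr0, zero_comp]
    exact rfl
  have : IsIso g := (Triangle.isZero₁_iff_isIso₂ _ mem).1 hA0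
  exact ObjectProperty.prop_of_iso (t.ge n) (asIso g).symm hB

lemma le_ext (Tr : Triangle D) (hTr : Tr ∈ distTriang D) (n : ℤ)
    (h₁ : t.le n Tr.obj₁) (h₃ : t.le n Tr.obj₃) : t.le n Tr.obj₂ := by
  refine le_of_orth t n _ (fun Z hZ f => ?_)
  have h1 : Tr.mor₁ ≫ f = 0 := tzero t _ (show n < n + 1 by omega) h₁ hZ
  obtain ⟨g, hg⟩ := Triangle.yoneda_exact₂ _ hTr f h1
  rw [hg, tzero t g (show n < n + 1 by omega) h₃ hZ, comp_zero]

lemma ge_ext (Tr : Triangle D) (hTr : Tr ∈ distTriang D) (n : ℤ)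
    (h₁ : t.ge n Tr.obj₁) (h₃ : t.ge n Tr.obj₃) : t.ge n Tr.obj₂ := by
  refine ge_of_orth t n _ (fun W hW f => ?_)
  have h1 : f ≫ Tr.mor₂ = 0 := tzero t _ (show n - 1 < n by omega) hW h₃
  obtain ⟨g, hg⟩ := Triangle.coyoneda_exact₂ _ hTr f h1
  rw [hg, tzero t g (show n - 1 < n by omega) hW h₁, zero_comp]

lemma le_of_isZero {X : D} (hX : IsZero X) (n : ℤ) : t.le n X :=
  le_of_orth t n X (fun _ _ f => hX.eq_of_src f 0)

lemma ge_of_isZero {X : D} (hX : IsZero X) (n : ℤ) : t.ge n X :=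
  ge_of_orth t n X (fun _ _ f => hX.eq_of_tgt f 0)

lemma isZero_of_shift {X : D} (n : ℤ) (h : IsZero ((X⟦n⟧ : D))) : IsZero X := by
  rw [IsZero.iff_id_eq_zero] at h ⊢
  apply (shiftFunctor D n).map_injective
  rw [CategoryTheory.Functor.map_id, CategoryTheory.Functor.map_zero]
  exact h

variable (T F : D → Prop)

/-- The class `D^{≤ -1} * T`, which will be the `≤ 0` part of the tilted t-structure. -/
def Base (X : D) : Prop :=
  ∃ (P Q : D) (f : P ⟶ X) (g : X ⟶ Q) (h : Q ⟶ P⟦(1:ℤ)⟧),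
    t.le (-1) P ∧ T Q ∧ Triangle.mk f g h ∈ distTriang D

variable {t T F}

lemma base_congr {m m' : ℤ} (h : m = m') (X : D) (hX : Base t T ((X⟦m⟧:D))) :
    Base t T ((X⟦m'⟧:D)) := by subst h; exact hX

lemma Base.iso {X Y : D} (e : X ≅ Y) (hX : Base t T X) : Base t T Y := by
  obtain ⟨P, Q, f, g, h, hP, hQ, mem⟩ := hX
  refine ⟨P, Q, f ≫ e.hom, e.inv ≫ g, h, hP, hQ, isomorphic_distinguished _ mem _ ?_⟩
  exact Triangle.isoMk _ _ (Iso.refl _) e.symm (Iso.refl _) (by dsimp [Triangle.mk]; simp) (by dsimp [Triangle.mk]; simp) (by dsimp [Triangle.mk]; simp)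

variable (htf : TorsionPairIn (heartP t) T F)
include htf

lemma zero_mem {Z : D} (hZ : IsZero Z) : T Z ∧ F Z := by
  obtain ⟨A, B, f, g, h, hA, hB, mem⟩ := htf.exists_triangle Z
    ⟨le_of_isZero t hZ 0, ge_of_isZero t hZ 0⟩
  have hiso : IsIso h := (Triangle.isZero₂_iff_isIso₃ _ mem).1 hZ
  have hA1 : IsZero ((A⟦(1:ℤ)⟧ : D)) := by
    have hle : t.le (-1) ((A⟦(1:ℤ)⟧ : D)) := t.le_shift 0 1 (-1) (by omega) A (htf.t_sub A hA).1
    have hge : t.ge 0 ((A⟦(1:ℤ)⟧ : D)) := ObjectProperty.prop_of_iso (t.ge 0) (asIso h) (htf.f_sub B hB).2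
    rw [IsZero.iff_id_eq_zero]
    exact tzero t _ (show (-1:ℤ) < 0 by omega) hle hge
  have hA0 : IsZero A := isZero_of_shift 1 hA1
  have hB0 : IsZero B := hA1.of_iso (asIso h)
  exact ⟨htf.t_iso (hA0.iso hZ) hA, htf.f_iso (hB0.iso hZ) hB⟩

lemma base_of_le_neg_one {X : D} (hX : t.le (-1) X) : Base t T X :=
  ⟨X, 0, 𝟙 X, 0, 0, hX, (zero_mem htf (isZero_zero D)).1, contractible_distinguished X⟩

lemma base_mem_T {X : D} (hX : T X) : Base t T X :=
  ⟨0, X, 0, 𝟙 X, 0, le_of_isZero t (isZero_zero D) (-1), hX, contractible_distinguished₁ X⟩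

lemma base_le_zero {X : D} (hX : Base t T X) : t.le 0 X := by
  obtain ⟨P, Q, f, g, h, hP, hQ, mem⟩ := hX
  exact le_ext t _ mem 0 (t.le_monotone (show (-1:ℤ) ≤ 0 by omega) _ hP) (htf.t_sub Q hQ).1

lemma base_hom_zero {W Z : D} (hW : Base t T W) (hZ : t.ge 0 Z)
    (hQZ : ∀ Q : D, T Q → ∀ g : Q ⟶ Z, g = 0) : ∀ f : W ⟶ Z, f = 0 := by
  obtain ⟨P, Q, u, v, w, hP, hQ, mem⟩ := hW
  intro f
  have h1 : u ≫ f = 0 := tzero t _ (show (-1:ℤ) < 0 by omega) hP hZ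
  obtain ⟨g, hg⟩ := Triangle.yoneda_exact₂ _ mem f h1
  change Q ⟶ Z at g
  dsimp [Triangle.mk] at hg
  rw [hg, hQZ Q hQ g, comp_zero]

lemma exists_tri (A : D) :
    ∃ (X Y : D) (_ : Base t T X) (_ : ∀ W, Base t T W → ∀ f : W ⟶ Y, f = 0)
      (f : X ⟶ A) (g : A ⟶ Y) (h : Y ⟶ X⟦(1:ℤ)⟧), Triangle.mk f g h ∈ distTriang D := by
  obtain ⟨Co, B, hCo, hB, ι, π, δ₁, mem₁⟩ := t.exists_triangle A 0 1 (by omega)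
  obtain ⟨C', H, hC', hH, b, c, δ₂, mem₂⟩ := t.exists_triangle Co (-1) 0 (by omega)
  have hH0 : t.le 0 H := by
    refine le_ext t _ (rot_of_distTriang _ mem₂) 0 hCo ?_
    exact t.le_monotone (show (-2:ℤ) ≤ 0 by omega) _ (t.le_shift (-1) 1 (-2) (by omega) C' hC')
  obtain ⟨tH, fH, j, k, δ₃, hTt, hFf, mem₃⟩ := htf.exists_triangle H ⟨hH0, hH⟩
  obtain ⟨X, a, p, mem₄⟩ := distinguished_cocone_triangle₂ (j ≫ δ₂)
  have mem₄'' : Triangle.mk (j ≫ δ₂) (-(a⟦(1:ℤ)⟧')) (-(p⟦(1:ℤ)⟧')) ∈ distTriang D :=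
    rot_of_distTriang _ (rot_of_distTriang _ mem₄)
  have mem₂'' : Triangle.mk δ₂ (-(b⟦(1:ℤ)⟧')) (-(c⟦(1:ℤ)⟧')) ∈ distTriang D :=
    rot_of_distTriang _ (rot_of_distTriang _ mem₂)
  obtain ⟨ρ₁, hρ₁, hρ₂⟩ := complete_distinguished_triangle_morphism _ _ mem₄'' mem₂''
    j (𝟙 _) (by dsimp [Triangle.mk]; simp)
  change ((X⟦(1:ℤ)⟧ : D)) ⟶ (Co⟦(1:ℤ)⟧ : D) at ρ₁
  replace hρ₁ : (-(a⟦(1:ℤ)⟧')) ≫ ρ₁ = 𝟙 ((C'⟦(1:ℤ)⟧:D)) ≫ (-(b⟦(1:ℤ)⟧')) := hρ₁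
  replace hρ₂ : (-(p⟦(1:ℤ)⟧')) ≫ j⟦(1:ℤ)⟧' = ρ₁ ≫ (-(c⟦(1:ℤ)⟧')) := hρ₂
  set ρ : X ⟶ Co := (shiftFunctor D (1:ℤ)).preimage ρ₁ with hρdef
  have hρshift : (shiftFunctor D (1:ℤ)).map ρ = ρ₁ := (shiftFunctor D (1:ℤ)).map_preimage ρ₁
  have haρ : a ≫ ρ = b := by
    apply (shiftFunctor D (1:ℤ)).map_injective
    rw [Functor.map_comp, hρshift]
    have h' := hρ₁
    rw [neg_comp, id_comp] at h'
    exact neg_inj.1 h'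
  have hρc : ρ ≫ c = p ≫ j := by
    apply (shiftFunctor D (1:ℤ)).map_injective
    rw [Functor.map_comp, Functor.map_comp, hρshift]
    have h' := hρ₂
    rw [neg_comp, comp_neg, neg_inj] at h'
    exact h'.symm
  obtain ⟨Y, q, r, mem₅⟩ := distinguished_cocone_triangle (ρ ≫ ι)
  refine ⟨X, Y, ⟨C', tH, a, p, j ≫ δ₂, hC', hTt, mem₄⟩, ?_, ρ ≫ ι, q, r, mem₅⟩
  intro W hW h₀
  have vB : ∀ f : W ⟶ B, f = 0 :=
    base_hom_zero htf hW (t.ge_antitone (show (0:ℤ) ≤ 1 by omega) _ hB)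
      (fun Q hQ g => tzero t g (show (0:ℤ) < 1 by omega) (htf.t_sub Q hQ).1 hB)
  have vfH : ∀ f : W ⟶ fH, f = 0 :=
    base_hom_zero htf hW (htf.f_sub fH hFf).2 (fun Q hQ g => htf.hom_zero hQ hFf g)
  have surj : ∀ g : W ⟶ A, ∃ g' : W ⟶ X, g' ≫ (ρ ≫ ι) = g := by
    intro g
    obtain ⟨g₁, hg₁⟩ := Triangle.coyoneda_exact₂ _ mem₁ g (vB _)
    change W ⟶ Co at g₁
    replace hg₁ : g = g₁ ≫ ι := hg₁
    obtain ⟨g₂, hg₂⟩ := Triangle.coyoneda_exact₂ _ mem₃ (g₁ ≫ c) (vfH _)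
    change W ⟶ tH at g₂
    replace hg₂ : g₁ ≫ c = g₂ ≫ j := hg₂
    have hcδ : c ≫ δ₂ = 0 := comp_distTriang_mor_zero₂₃ _ mem₂
    obtain ⟨g₃, hg₃⟩ := Triangle.coyoneda_exact₃ _ mem₄ g₂ (by
      show g₂ ≫ (j ≫ δ₂) = 0
      rw [← Category.assoc, ← hg₂, Category.assoc, hcδ, comp_zero])
    change W ⟶ X at g₃
    replace hg₃ : g₂ = g₃ ≫ p := hg₃
    have hdiff : (g₃ ≫ ρ - g₁) ≫ c = 0 := by
      rw [sub_comp, Category.assoc, hρc, ← Category.assoc, ← hg₃, ← hg₂, sub_self]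
    obtain ⟨e, he⟩ := Triangle.coyoneda_exact₂ _ mem₂ (g₃ ≫ ρ - g₁) hdiff
    change W ⟶ C' at e
    replace he : g₃ ≫ ρ - g₁ = e ≫ b := he
    refine ⟨g₃ - e ≫ a, ?_⟩
    have hkey : (g₃ - e ≫ a) ≫ ρ = g₁ := by
      rw [sub_comp, Category.assoc, haρ, ← he]
      abel
    rw [← Category.assoc, hkey, ← hg₁]
  have inj : ∀ gg : W ⟶ (X⟦(1:ℤ)⟧ : D), gg ≫ (ρ ≫ ι)⟦(1:ℤ)⟧' = 0 → gg = 0 := by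
    intro gg hgg
    have hgρ : gg ≫ ρ⟦(1:ℤ)⟧' = 0 := by
      have h1 : (gg ≫ ρ⟦(1:ℤ)⟧') ≫ (-(ι⟦(1:ℤ)⟧')) = 0 := by
        rw [comp_neg, Category.assoc, ← Functor.map_comp, hgg, neg_zero]
      have mem₁'' : Triangle.mk δ₁ (-(ι⟦(1:ℤ)⟧')) (-(π⟦(1:ℤ)⟧')) ∈ distTriang D :=
        rot_of_distTriang _ (rot_of_distTriang _ mem₁)
      obtain ⟨w, hw⟩ := Triangle.coyoneda_exact₂ _ mem₁'' (gg ≫ ρ⟦(1:ℤ)⟧') h1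
      change W ⟶ B at w
      replace hw : gg ≫ ρ⟦(1:ℤ)⟧' = w ≫ δ₁ := hw
      rw [hw, vB w, zero_comp]
    have hgp : gg ≫ p⟦(1:ℤ)⟧' = 0 := by
      have h1 : (gg ≫ p⟦(1:ℤ)⟧') ≫ (-(j⟦(1:ℤ)⟧')) = 0 := by
        rw [comp_neg, Category.assoc, ← Functor.map_comp, ← hρc, Functor.map_comp,
          ← Category.assoc, hgρ, zero_comp, neg_zero]
      have mem₃'' : Triangle.mk δ₃ (-(j⟦(1:ℤ)⟧')) (-(k⟦(1:ℤ)⟧')) ∈ distTriang D :=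
        rot_of_distTriang _ (rot_of_distTriang _ mem₃)
      obtain ⟨u, hu⟩ := Triangle.coyoneda_exact₂ _ mem₃'' (gg ≫ p⟦(1:ℤ)⟧') h1
      change W ⟶ fH at u
      replace hu : gg ≫ p⟦(1:ℤ)⟧' = u ≫ δ₃ := hu
      rw [hu, vfH u, zero_comp]
    obtain ⟨v, hv⟩ := Triangle.coyoneda_exact₁ _ (rot_of_distTriang _ mem₄) gg hgp
    change W ⟶ (C'⟦(1:ℤ)⟧ : D) at v
    replace hv : gg = v ≫ (-(a⟦(1:ℤ)⟧')) := hv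
    have h2 : gg ≫ ρ⟦(1:ℤ)⟧' = -(v ≫ b⟦(1:ℤ)⟧') := by
      rw [hv]
      show (v ≫ (-(a⟦(1:ℤ)⟧'))) ≫ ρ⟦(1:ℤ)⟧' = -(v ≫ b⟦(1:ℤ)⟧')
      rw [comp_neg, neg_comp, Category.assoc, ← Functor.map_comp, haρ]
    have hvb : v ≫ (-(b⟦(1:ℤ)⟧')) = 0 := by
      rw [comp_neg]
      have h3 := h2
      rw [hgρ] at h3
      rw [← h3]
    obtain ⟨w₀, hw₀⟩ := Triangle.coyoneda_exact₂ _ mem₂'' v hvb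
    change W ⟶ H at w₀
    replace hw₀ : v = w₀ ≫ δ₂ := hw₀
    obtain ⟨w', hw'⟩ := Triangle.coyoneda_exact₂ _ mem₃ w₀ (vfH _)
    change W ⟶ tH at w'
    replace hw' : w₀ = w' ≫ j := hw'
    have hαa : (j ≫ δ₂) ≫ a⟦(1:ℤ)⟧' = 0 := comp_distTriang_mor_zero₃₁ _ mem₄
    have h5 : ((w' ≫ j) ≫ δ₂) ≫ a⟦(1:ℤ)⟧' = w' ≫ ((j ≫ δ₂) ≫ a⟦(1:ℤ)⟧') := by
      simp only [Category.assoc]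
    rw [hv]
    show v ≫ (-(a⟦(1:ℤ)⟧')) = 0
    rw [hw₀, hw', comp_neg, h5, hαa, comp_zero, neg_zero]
  have h6 : (h₀ ≫ r) ≫ (ρ ≫ ι)⟦(1:ℤ)⟧' = 0 := by
    have h7 : r ≫ (ρ ≫ ι)⟦(1:ℤ)⟧' = 0 := comp_distTriang_mor_zero₃₁ _ mem₅
    rw [Category.assoc, h7, comp_zero]
  obtain ⟨h', hh'⟩ := Triangle.coyoneda_exact₃ _ mem₅ h₀ (inj _ h6)
  change W ⟶ A at h'
  replace hh' : h₀ = h' ≫ q := hh'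
  obtain ⟨g', hg'⟩ := surj h'
  have h8 : (ρ ≫ ι) ≫ q = 0 := comp_distTriang_mor_zero₁₂ _ mem₅
  rw [hh', ← hg', Category.assoc, h8, comp_zero]

/-- The HRS tilted t-structure. -/
def tilt : TStructure D where
  le n X := Base t T ((X⟦n⟧ : D))
  ge n X := ∀ W : D, Base t T ((W⟦n-1⟧ : D)) → ∀ f : W ⟶ X, f = 0
  le_isClosedUnderIsomorphisms n := ⟨fun e hX => Base.iso ((shiftFunctor D n).mapIso e) hX⟩
  ge_isClosedUnderIsomorphisms n := ⟨fun {X Y} e hX W hW f => by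
    have h1 : f ≫ e.inv = 0 := hX W hW (f ≫ e.inv)
    calc f = (f ≫ e.inv) ≫ e.hom := by simp
    _ = 0 := by rw [h1, zero_comp]⟩
  le_shift n a n' h X hX := Base.iso ((shiftFunctorAdd' D a n' n h).app X) hX
  ge_shift n a n' h X hX := by
    intro W hW f
    have e : (((W⟦(-a : ℤ)⟧ : D))⟦a⟧ : D) ≅ W := (shiftFunctorCompIsoId D (-a) a (by omega)).app W
    have hW' : Base t T (((W⟦(-a:ℤ)⟧ : D))⟦n-1⟧) :=
      Base.iso ((shiftFunctorAdd' D (-a) (n-1) (n'-1) (by omega)).app W) hW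
    have h9 : e.hom ≫ f = 0 := by
      have h10 := hX _ hW' ((shiftFunctor D a).preimage (e.hom ≫ f))
      calc e.hom ≫ f
          = (shiftFunctor D a).map ((shiftFunctor D a).preimage (e.hom ≫ f)) :=
            ((shiftFunctor D a).map_preimage _).symm
        _ = 0 := by rw [h10, CategoryTheory.Functor.map_zero]
    calc f = e.inv ≫ (e.hom ≫ f) := by simp
    _ = 0 := by rw [h9, comp_zero]
  zero' X Y f hX hY := hY X (base_congr (by norm_num) X hX) f
  le_zero_le := fun X hX => by
    have h0 : Base t T X := Base.iso ((shiftFunctorZero D ℤ).app X) hX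
    have h1 : t.le 0 X := base_le_zero htf h0
    exact base_of_le_neg_one htf (t.le_shift 0 1 (-1) (by omega) X h1)
  ge_one_le := fun X hX W hW f => by
    replace hW := base_congr (show (0:ℤ)-1 = -1 by norm_num) W hW
    have h0 : t.le 0 ((W⟦(-1:ℤ)⟧ : D)) := base_le_zero htf hW
    have h1 : t.le (-1) (((W⟦(-1:ℤ)⟧ : D))⟦(1:ℤ)⟧) := t.le_shift 0 1 (-1) (by omega) _ h0
    have h2 : t.le (-1) ((W⟦(0:ℤ)⟧ : D)) := ObjectProperty.prop_of_iso (t.le (-1))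
      ((shiftFunctorCompIsoId D (-1) 1 (by omega)).app W ≪≫
        ((shiftFunctorZero D ℤ).app W).symm) h1
    exact hX W (base_congr (by norm_num) W (base_of_le_neg_one htf h2)) f
  exists_triangle_zero_one A := by
    obtain ⟨X, Y, hX, hY, f, g, h, mem⟩ := exists_tri htf A
    refine ⟨X, Y, Base.iso ((shiftFunctorZero D ℤ).app X).symm hX, ?_, f, g, h, mem⟩
    intro W hW fw
    exact hY W (Base.iso ((shiftFunctorZero D ℤ).app W)
      (base_congr (show (1:ℤ)-1 = 0 by norm_num) W hW)) fw

end HRS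

end HRSAux


/-- HRS tilting: given a t-structure with heart `H` on a
triangulated category `D` and a torsion pair `(T, F)` on `H`, the full
subcategory `F[1] * T` is the heart of a t-structure on `D`. -/
theorem statement2 {D : Type u} [Category.{v} D] [Preadditive D] [HasZeroObject D]
    [HasShift D ℤ] [∀ n : ℤ, (shiftFunctor D n).Additive] [Pretriangulated D]
    (t : TStructure D) (T F : D → Prop)
    (htf : TorsionPairIn (heartP t) T F) :
    ∃ t' : TStructure D, ∀ E : D, heartP t' E ↔ TiltSharp T F E := by
  refine ⟨HRS.tilt htf, fun E => ⟨?_, ?_⟩⟩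
  · rintro ⟨hLE, hGE⟩
    have hE : HRS.Base t T E := HRS.Base.iso ((shiftFunctorZero D ℤ).app E) hLE
    obtain ⟨P, Q, u, v, w, hP, hQ, memE⟩ := hE
    have memE' := inv_rot_of_distTriang _ memE
    have hvan : ∀ V : D, HRS.Base t T ((V⟦(-1:ℤ)⟧:D)) → t.le 0 V → ∀ f : V ⟶ P, f = 0 := by
      intro V hbase hV0 f
      have hfu : f ≫ (Triangle.mk u v w).invRotate.mor₂ = 0 :=
        hGE V (HRS.base_congr (show (-1:ℤ) = 0 - 1 by norm_num) V hbase) (f ≫ u)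
      obtain ⟨g₀, hg₀⟩ := Triangle.coyoneda_exact₂ _ memE' f hfu
      change V ⟶ (Q⟦(-1:ℤ)⟧ : D) at g₀
      dsimp [Triangle.mk, Triangle.invRotate] at hg₀
      have hg00 : g₀ = 0 := HRS.tzero t g₀ (show (0:ℤ) < 1 by omega) hV0
        (t.ge_shift 0 (-1) 1 (by omega) Q (htf.t_sub Q hQ).2)
      rw [hg₀, hg00, zero_comp]
    have hTP : ∀ T'' : D, T T'' → ∀ f : ((T''⟦(1:ℤ)⟧:D)) ⟶ P, f = 0 := by
      intro T'' hT'' f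
      refine hvan _ ?_ ?_ f
      · exact HRS.Base.iso (((shiftFunctorCompIsoId D (1:ℤ) (-1:ℤ) (by omega)).app T'').symm)
          (HRS.base_mem_T htf hT'')
      · exact t.le_monotone (show (-1:ℤ) ≤ 0 by omega) _
          (t.le_shift 0 1 (-1) (by omega) T'' (htf.t_sub T'' hT'').1)
    have hPGE : t.ge (-1) P := by
      refine HRS.ge_of_orth t (-1) P (fun V hV f => ?_)
      refine hvan V ?_ (t.le_monotone (show (-1:ℤ)-1 ≤ 0 by omega) _ hV) f
      exact HRS.base_of_le_neg_one htf (t.le_shift ((-1:ℤ)-1) (-1) (-1) (by omega) V hV)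
    have hP'heart : heartP t ((P⟦(-1:ℤ)⟧:D)) :=
      ⟨t.le_shift (-1) (-1) 0 (by omega) P hP, t.ge_shift (-1) (-1) 0 (by omega) P hPGE⟩
    obtain ⟨tP, fP, j', k', δ', hTt, hFf, mem₇⟩ := htf.exists_triangle _ hP'heart
    have e : (((P⟦(-1:ℤ)⟧:D))⟦(1:ℤ)⟧ : D) ≅ P := (shiftFunctorCompIsoId D (-1) 1 (by omega)).app P
    have hj' : j' = 0 := by
      apply (shiftFunctor D (1:ℤ)).map_injective
      rw [CategoryTheory.Functor.map_zero]
      have h10 : (shiftFunctor D (1:ℤ)).map j' ≫ e.hom = 0 := hTP tP hTt _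
      calc (shiftFunctor D (1:ℤ)).map j'
          = ((shiftFunctor D (1:ℤ)).map j' ≫ e.hom) ≫ e.inv := by simp
        _ = 0 := by rw [h10, zero_comp]
    have htPzero : IsZero tP := by
      rw [IsZero.iff_id_eq_zero]
      obtain ⟨g₀, hg₀⟩ := Triangle.coyoneda_exact₂ _ (inv_rot_of_distTriang _ mem₇) (𝟙 tP)
        (show 𝟙 tP ≫ j' = 0 by rw [hj', comp_zero])
      change tP ⟶ (fP⟦(-1:ℤ)⟧ : D) at g₀
      dsimp [Triangle.mk, Triangle.invRotate] at hg₀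
      have hg00 : g₀ = 0 := HRS.tzero t g₀ (show (0:ℤ) < 1 by omega) (htf.t_sub _ hTt).1
        (t.ge_shift 0 (-1) 1 (by omega) fP (htf.f_sub _ hFf).2)
      rw [hg₀, hg00, zero_comp]
    have hk'iso : IsIso k' := (Triangle.isZero₁_iff_isIso₂ _ mem₇).1 htPzero
    refine ⟨P⟦(-1:ℤ)⟧, Q, e.hom ≫ u, v, w ≫ (shiftFunctor D (1:ℤ)).map e.inv,
      htf.f_iso (asIso k').symm hFf, hQ, ?_⟩
    refine isomorphic_distinguished _ memE _ ?_
    refine Triangle.isoMk _ _ e (Iso.refl E) (Iso.refl Q) (by dsimp [Triangle.mk]; simp) (by dsimp [Triangle.mk]; simp) ?_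
    dsimp [Triangle.mk]
    rw [Category.assoc, ← Functor.map_comp, e.inv_hom_id, CategoryTheory.Functor.map_id, Category.comp_id, Category.id_comp]
  · rintro ⟨F', T', fE, gE, hhE, hF', hT', memE⟩
    constructor
    · exact HRS.Base.iso ((shiftFunctorZero D ℤ).app E).symm
        ⟨F'⟦(1:ℤ)⟧, T', fE, gE, hhE,
          t.le_shift 0 1 (-1) (by omega) F' (htf.f_sub F' hF').1, hT', memE⟩
    · intro W hW m
      have hW' : HRS.Base t T ((W⟦(-1:ℤ)⟧ : D)) :=
        HRS.base_congr (show (0:ℤ)-1 = -1 by norm_num) W hW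
      have homE : ∀ V : D, (∀ f1 : V ⟶ ((F'⟦(1:ℤ)⟧:D)), f1 = 0) → (∀ f2 : V ⟶ T', f2 = 0) →
          ∀ f : V ⟶ E, f = 0 := by
        intro V h1 h2 f
        obtain ⟨g₀, hg₀⟩ := Triangle.coyoneda_exact₂ _ memE f (h2 _)
        dsimp [Triangle.mk] at hg₀
        rw [hg₀, h1 g₀, zero_comp]
      obtain ⟨P₁, Q₁, u₁, v₁, w₁, hP₁, hQ₁, mem₆⟩ := hW'
      have mem₆''' : Triangle.mk (-(u₁⟦(1:ℤ)⟧')) (-(v₁⟦(1:ℤ)⟧')) (-(w₁⟦(1:ℤ)⟧')) ∈ distTriang D :=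
        rot_of_distTriang _ (rot_of_distTriang _ (rot_of_distTriang _ mem₆))
      have e₂ : (((W⟦(-1:ℤ)⟧:D))⟦(1:ℤ)⟧ : D) ≅ W :=
        (shiftFunctorCompIsoId D (-1) 1 (by omega)).app W
      have hP₁E : ∀ f : ((P₁⟦(1:ℤ)⟧:D)) ⟶ E, f = 0 := by
        refine homE _ (fun f1 => ?_) (fun f2 => ?_)
        · exact HRS.tzero t f1 (show (-2:ℤ) < -1 by omega)
            (t.le_shift (-1) 1 (-2) (by omega) P₁ hP₁)
            (t.ge_shift 0 1 (-1) (by omega) F' (htf.f_sub F' hF').2)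
        · exact HRS.tzero t f2 (show (-2:ℤ) < 0 by omega)
            (t.le_shift (-1) 1 (-2) (by omega) P₁ hP₁) (htf.t_sub T' hT').2
      have hQ₁E : ∀ f : ((Q₁⟦(1:ℤ)⟧:D)) ⟶ E, f = 0 := by
        refine homE _ (fun f1 => ?_) (fun f2 => ?_)
        · have h0 : (shiftFunctor D (1:ℤ)).preimage f1 = 0 := htf.hom_zero hQ₁ hF' _
          calc f1 = (shiftFunctor D (1:ℤ)).map ((shiftFunctor D (1:ℤ)).preimage f1) :=
              ((shiftFunctor D (1:ℤ)).map_preimage f1).symm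
            _ = 0 := by rw [h0, CategoryTheory.Functor.map_zero]
        · exact HRS.tzero t f2 (show (-1:ℤ) < 0 by omega)
            (t.le_shift 0 1 (-1) (by omega) Q₁ (htf.t_sub Q₁ hQ₁).1) (htf.t_sub T' hT').2
      have hm' : e₂.hom ≫ m = 0 := by
        obtain ⟨g₂, hg₂⟩ := Triangle.yoneda_exact₂ _ mem₆''' (e₂.hom ≫ m) (hP₁E _)
        dsimp [Triangle.mk] at hg₂
        rw [hg₂, hQ₁E g₂, comp_zero]
      calc m = e₂.inv ≫ (e₂.hom ≫ m) := by simp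
      _ = 0 := by rw [hm', comp_zero]
end

section
/- Let π : D → D/V be a Verdier quotient of triangulated categories, and let H and H' be bounded hearts of D that are both compatible with V (i.e., H ∩ V is a bounded heart of V and a Serre subcategory of H, and likewise for H'). If H' is the forward HRS tilt of H at a torsion-free class F with F ⊆ V, then the induced quotient hearts H/(H ∩ V) and H'/(H' ∩ V) coincide as hearts in D/V. -/
open CategoryTheory CategoryTheory.Limits CategoryTheory.Pretriangulated
  CategoryTheory.Triangulated ZeroObject

open Paper

section Aux

variable {D : Type u} [Category.{v} D] [Preadditive D] [HasZeroObject D] [HasShift D ℤ]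
  [∀ n : ℤ, (shiftFunctor D n).Additive] [Pretriangulated D]

lemma heartP_of_isZero (t : TStructure D) {Z : D} (hZ : IsZero Z) : heartP t Z := by
  obtain ⟨X, Y, hX, hY, f, g, h, mem⟩ := t.exists_triangle_zero_one Z
  have hmor : IsIso (Triangle.mk f g h).mor₃ :=
    ((Triangle.mk f g h).isZero₂_iff_isIso₃ mem).1 hZ
  have e : Y ≅ X⟦(1 : ℤ)⟧ := @asIso _ _ _ _ (Triangle.mk f g h).mor₃ hmor
  have h1 : t.ge 1 (X⟦(1 : ℤ)⟧) := ((t.ge 1).prop_iff_of_iso e).1 hY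
  have h2 : t.ge 2 (X⟦(1 : ℤ)⟧⟦(-1 : ℤ)⟧) := t.ge_shift 1 (-1) 2 (by omega) _ h1
  have h3 : t.ge 2 X :=
    ((t.ge 2).prop_iff_of_iso ((shiftEquiv D (1 : ℤ)).unitIso.symm.app X)).1 h2
  have h4 : t.ge 1 X := t.ge_antitone (by omega) _ h3
  have hXz : IsZero X := by
    rw [IsZero.iff_id_eq_zero]
    exact t.zero' (𝟙 X) hX h4
  have hYz : IsZero Y := IsZero.of_iso ((shiftFunctor D (1 : ℤ)).map_isZero hXz) e
  exact ⟨((t.le 0).prop_iff_of_iso (hZ.iso hXz)).2 hX,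
    ((t.ge 0).prop_iff_of_iso (hZ.iso hYz)).2 (t.ge_antitone (by omega) _ hY)⟩

end Aux

universe v u v₁ u₁

/-- Let `π : D ⥤ Q` be the Verdier quotient by a thick
subcategory `V`, and let `t`, `t'` be bounded hearts of `D` compatible with
`V`. If `heartP t'` is the forward HRS tilt of `heartP t` at a torsion-free
class `F ⊆ V`, then the two induced quotient hearts in `Q` coincide. -/
theorem statement4
    {D : Type u} [Category.{v} D] [Preadditive D] [HasZeroObject D] [HasShift D ℤ]
    [∀ n : ℤ, (shiftFunctor D n).Additive] [Pretriangulated D]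
    {Q : Type u₁} [Category.{v₁} Q] [Preadditive Q] [HasZeroObject Q] [HasShift Q ℤ]
    [∀ n : ℤ, (shiftFunctor Q n).Additive] [Pretriangulated Q]
    (V : D → Prop) (hV : IsThick V)
    (π : D ⥤ Q) [π.CommShift ℤ] [π.IsTriangulated]
    (hπ : IsVerdierQuotient π V)
    (t t' : TStructure D) (hb : IsBoundedT t) (hb' : IsBoundedT t')
    (hc : CompatibleWith t V) (hc' : CompatibleWith t' V)
    (T F : D → Prop) (htf : TorsionPairIn (heartP t) T F)
    (hFV : ∀ X : D, F X → V X)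
    (htilt : ∀ X : D, heartP t' X ↔ TiltSharp T F X) :
    ∀ Y : Q, ImP π (heartP t) Y ↔ ImP π (heartP t') Y := by
  -- Step 1: the torsion-free class `F` contains a zero object.
  have hzF : ∃ Z : D, IsZero Z ∧ F Z := by
    obtain ⟨A₀, B₀, f₀, g₀, h₀, hA₀, hB₀, mem₀⟩ :=
      htf.exists_triangle 0 (heartP_of_isZero t (isZero_zero D))
    have hiso : IsIso (Triangle.mk f₀ g₀ h₀).mor₃ :=
      ((Triangle.mk f₀ g₀ h₀).isZero₂_iff_isIso₃ mem₀).1 (isZero_zero D)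
    have e : B₀ ≅ A₀⟦(1 : ℤ)⟧ := @asIso _ _ _ _ (Triangle.mk f₀ g₀ h₀).mor₃ hiso
    have hhA : heartP t A₀ := htf.t_sub _ hA₀
    have hhB : heartP t B₀ := htf.f_sub _ hB₀
    have hge : t.ge 0 (A₀⟦(1 : ℤ)⟧) := ((t.ge 0).prop_iff_of_iso e).1 hhB.2
    have hge1 : t.ge 1 (A₀⟦(1 : ℤ)⟧⟦(-1 : ℤ)⟧) := t.ge_shift 0 (-1) 1 (by omega) _ hge
    have hge1' : t.ge 1 A₀ :=
      ((t.ge 1).prop_iff_of_iso ((shiftEquiv D (1 : ℤ)).unitIso.symm.app A₀)).1 hge1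
    have hAz : IsZero A₀ := by
      rw [IsZero.iff_id_eq_zero]
      exact t.zero' (𝟙 A₀) hhA.1 hge1'
    exact ⟨B₀, IsZero.of_iso ((shiftFunctor D (1 : ℤ)).map_isZero hAz) e, hB₀⟩
  -- Step 2: every torsion object lies in the tilted heart.
  have hT_t' : ∀ X : D, T X → heartP t' X := by
    intro X hX
    obtain ⟨Z, hZz, hZF⟩ := hzF
    rw [htilt]
    refine ⟨Z, X, 0, 𝟙 X, 0, hZF, hX, ?_⟩
    refine isomorphic_distinguished _ (contractible_distinguished₁ X) _ ?_
    refine Triangle.isoMk _ _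
      (IsZero.iso ((shiftFunctor D (1 : ℤ)).map_isZero hZz) (isZero_zero D))
      (Iso.refl _) (Iso.refl _) (by simp [Triangle.mk]) (by simp [Triangle.mk]) (by simp [Triangle.mk])
  intro Y
  constructor
  · rintro ⟨X, hX, ⟨e⟩⟩
    obtain ⟨A, B, f, g, h, hA, hB, mem⟩ := htf.exists_triangle X hX
    have : IsIso (π.map f) := hπ.inverts A X f B g h mem (hFV _ hB)
    exact ⟨A, hT_t' A hA, ⟨asIso (π.map f) ≪≫ e⟩⟩
  · rintro ⟨X, hX, ⟨e⟩⟩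
    obtain ⟨A, B, f, g, h, hA, hB, mem⟩ := (htilt X).1 hX
    have memrot : Triangle.mk g h (-f⟦(1 : ℤ)⟧') ∈ distTriang D := rot_of_distTriang _ mem
    have : IsIso (π.map g) := hπ.inverts X B g _ h (-f⟦(1 : ℤ)⟧') memrot
      (hV.shift _ 1 (hV.shift _ 1 (hFV _ hA)))
    exact ⟨B, htf.t_sub B hB, ⟨(asIso (π.map g)).symm ≪≫ e⟩⟩
end

section
/- In a recollement of abelian categories R(A', A, A'') with functors (q, ι, p) and (ℓ, π, r), for any torsion pair (X, Y) in A: (i) the pair (q(X), p(Y)) is a torsion pair in A'; (ii) the pair (π(X), π(Y)) is a torsion pair in A'' if and only if ℓπ(X) ⊆ X, if and only if rπ(Y) ⊆ Y. -/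
open CategoryTheory CategoryTheory.Limits CategoryTheory.Pretriangulated
  CategoryTheory.Triangulated ZeroObject

open Paper

universe v u v₁ u₁ v₂ u₂

section Statement6Aux

variable {A' : Type u} [Category.{v} A'] [Abelian A']
    {A : Type u₁} [Category.{v₁} A] [Abelian A]
    {A'' : Type u₂} [Category.{v₂} A''] [Abelian A'']
    (R : RecollementData A' A A'')

/-- In a recollement, the unit of the adjunction `q ⊣ ι` is (componentwise) an epimorphism. -/
lemma statement6_epi_unit (x : A) : Epi (R.adj_q.unit.app x) := by
  haveI := R.ι_full; haveI := R.ι_faithful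
  haveI : R.q.IsLeftAdjoint := R.adj_q.isLeftAdjoint
  haveI : R.π.IsLeftAdjoint := R.adj_r.isLeftAdjoint
  set η : x ⟶ R.ι.obj (R.q.obj x) := R.adj_q.unit.app x with hη
  set e : R.ι.obj (R.q.obj x) ⟶ cokernel η := cokernel.π η with he
  haveI : IsIso (R.q.map η) := by
    have h1 : R.q.map η ≫ R.adj_q.counit.app (R.q.obj x) = 𝟙 _ :=
      R.adj_q.left_triangle_components x
    exact IsIso.of_isIso_fac_right h1
  have hqe : R.q.map η ≫ R.q.map e = 0 := by
    rw [← R.q.map_comp, he, cokernel.condition, R.q.map_zero]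
  have hqe0 : R.q.map e = 0 := by
    rw [← cancel_epi (R.q.map η), comp_zero, hqe]
  have hqc : IsZero (R.q.obj (cokernel η)) := IsZero.of_epi_eq_zero _ hqe0
  have hπι : IsZero (R.π.obj (R.ι.obj (R.q.obj x))) :=
    (R.im_eq_ker _).1 ⟨R.q.obj x, ⟨Iso.refl _⟩⟩
  have hπe : R.π.map e = 0 := hπι.eq_of_src _ _
  have hπc : IsZero (R.π.obj (cokernel η)) := IsZero.of_epi_eq_zero _ hπe
  obtain ⟨d, ⟨φ⟩⟩ := (R.im_eq_ker _).2 hπc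
  have hd : IsZero d := by
    have h2 : IsZero (R.q.obj (R.ι.obj d)) := hqc.of_iso (R.q.mapIso φ)
    exact h2.of_iso (asIso (R.adj_q.counit.app d)).symm
  have hc : IsZero (cokernel η) := (R.ι.map_isZero hd).of_iso φ.symm
  exact Abelian.epi_of_cokernel_π_eq_zero _ (hc.eq_of_tgt _ _)

lemma statement6_hom_qp {X Y : A → Prop} (hXY : IsTorsionPair X Y)
    {x y : A} (hx : X x) (hy : Y y) (g : R.q.obj x ⟶ R.p.obj y) : g = 0 := by
  haveI := R.ι_full; haveI := R.ι_faithful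
  haveI : R.p.IsRightAdjoint := R.adj_p.isRightAdjoint
  haveI := statement6_epi_unit R x
  have hg' : (R.adj_p.homEquiv (R.q.obj x) y).symm g = 0 := by
    rw [← cancel_epi (R.adj_q.unit.app x), comp_zero]
    exact hXY.hom_zero hx hy _
  calc g = (R.adj_p.homEquiv _ _) ((R.adj_p.homEquiv _ _).symm g) :=
        (Equiv.apply_symm_apply _ _).symm
    _ = 0 := by rw [hg', Adjunction.homEquiv_apply, Functor.map_zero, comp_zero]

lemma statement6_part1 {X Y : A → Prop} (hXY : IsTorsionPair X Y) :
    IsTorsionPair (ImP R.q X) (ImP R.p Y) := by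
  haveI := R.ι_full; haveI := R.ι_faithful
  haveI : R.q.IsLeftAdjoint := R.adj_q.isLeftAdjoint
  haveI : R.ι.IsRightAdjoint := R.adj_q.isRightAdjoint
  haveI : R.ι.IsLeftAdjoint := R.adj_p.isLeftAdjoint
  haveI : R.p.IsRightAdjoint := R.adj_p.isRightAdjoint
  haveI : R.π.IsLeftAdjoint := R.adj_r.isLeftAdjoint
  haveI : R.π.IsRightAdjoint := R.adj_l.isRightAdjoint
  haveI : PreservesFiniteLimits R.π := ⟨fun _ _ _ => inferInstance⟩
  haveI : PreservesFiniteColimits R.π := ⟨fun _ _ _ => inferInstance⟩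
  haveI : PreservesFiniteLimits R.ι := ⟨fun _ _ _ => inferInstance⟩
  haveI : PreservesFiniteColimits R.ι := ⟨fun _ _ _ => inferInstance⟩
  constructor
  · rintro x y e ⟨z, hz, ⟨i⟩⟩; exact ⟨z, hz, ⟨i ≪≫ e⟩⟩
  · rintro x y e ⟨z, hz, ⟨i⟩⟩; exact ⟨z, hz, ⟨i ≪≫ e⟩⟩
  · rintro a b ⟨x, hx, ⟨i⟩⟩ ⟨y, hy, ⟨j⟩⟩ f
    have hg : i.hom ≫ f ≫ j.inv = 0 := statement6_hom_qp R hXY hx hy _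
    calc f = i.inv ≫ (i.hom ≫ f ≫ j.inv) ≫ j.hom := by simp
      _ = 0 := by rw [hg, zero_comp, comp_zero]
  · intro M
    obtain ⟨x, y, f, g, w, hx, hy, hse⟩ := hXY.exists_ses (R.ι.obj M)
    haveI := hse.mono_f; haveI := hse.epi_g
    have hπ : ((ShortComplex.mk f g w).map R.π).ShortExact := hse.map_of_exact R.π
    have hz : IsZero (R.π.obj (R.ι.obj M)) := (R.im_eq_ker _).1 ⟨M, ⟨Iso.refl _⟩⟩
    haveI : Mono (R.π.map f) := hπ.mono_f
    haveI : Epi (R.π.map g) := hπ.epi_g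
    have hzx : IsZero (R.π.obj x) := IsZero.of_mono (R.π.map f) hz
    have hzy : IsZero (R.π.obj y) := IsZero.of_epi (R.π.map g) hz
    obtain ⟨a, ⟨ia⟩⟩ := (R.im_eq_ker x).2 hzx
    obtain ⟨b, ⟨ib⟩⟩ := (R.im_eq_ker y).2 hzy
    let f' : a ⟶ M := R.ι.preimage (ia.hom ≫ f)
    let g' : M ⟶ b := R.ι.preimage (g ≫ ib.inv)
    have hf' : R.ι.map f' = ia.hom ≫ f := R.ι.map_preimage _
    have hg' : R.ι.map g' = g ≫ ib.inv := R.ι.map_preimage _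
    have w' : f' ≫ g' = 0 := by
      apply R.ι.map_injective
      rw [R.ι.map_comp, hf', hg', R.ι.map_zero, Category.assoc, ← Category.assoc f,
        w, zero_comp, comp_zero]
    have hiso : ((ShortComplex.mk f' g' w').map R.ι) ≅ ShortComplex.mk f g w := by
      refine ShortComplex.isoMk ia (Iso.refl _) ib ?_ ?_
      · dsimp [ShortComplex.map]; rw [hf']; simp
      · dsimp [ShortComplex.map]; rw [hg']; simp
    have hse' : ((ShortComplex.mk f' g' w').map R.ι).ShortExact :=
      ShortComplex.shortExact_of_iso hiso.symm hse
    have hexact : (ShortComplex.mk f' g' w').Exact :=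
      (ShortComplex.exact_map_iff_of_faithful _ R.ι).1 hse'.exact
    haveI : Mono (R.ι.map f') := hse'.mono_f
    haveI : Epi (R.ι.map g') := hse'.epi_g
    haveI : Mono f' := R.ι.mono_of_mono_map inferInstance
    haveI : Epi g' := R.ι.epi_of_epi_map inferInstance
    exact ⟨a, b, f', g', w',
      ⟨x, hx, ⟨R.q.mapIso ia.symm ≪≫ asIso (R.adj_q.counit.app a)⟩⟩,
      ⟨y, hy, ⟨R.p.mapIso ib.symm ≪≫ (asIso (R.adj_p.unit.app b)).symm⟩⟩,
      ShortComplex.ShortExact.mk' hexact inferInstance inferInstance⟩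

lemma statement6_tp_of_l {X Y : A → Prop} (hXY : IsTorsionPair X Y)
    (hl : ∀ a : A, X a → X (R.l.obj (R.π.obj a))) :
    IsTorsionPair (ImP R.π X) (ImP R.π Y) := by
  haveI := R.l_full; haveI := R.l_faithful
  haveI : R.π.IsRightAdjoint := R.adj_l.isRightAdjoint
  haveI : R.π.IsLeftAdjoint := R.adj_r.isLeftAdjoint
  haveI : R.l.IsLeftAdjoint := R.adj_l.isLeftAdjoint
  haveI : PreservesFiniteLimits R.π := ⟨fun _ _ _ => inferInstance⟩
  haveI : PreservesFiniteColimits R.π := ⟨fun _ _ _ => inferInstance⟩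
  have hom0 : ∀ {x y : A}, X x → Y y → ∀ h : R.π.obj x ⟶ R.π.obj y, h = 0 := by
    intro x y hx hy h
    have h0 : (R.adj_l.homEquiv (R.π.obj x) y).symm h = 0 := hXY.hom_zero (hl x hx) hy _
    calc h = (R.adj_l.homEquiv _ _) ((R.adj_l.homEquiv _ _).symm h) :=
          (Equiv.apply_symm_apply _ _).symm
      _ = 0 := by rw [h0, Adjunction.homEquiv_apply, Functor.map_zero, comp_zero]
  constructor
  · rintro x y e ⟨z, hz, ⟨i⟩⟩; exact ⟨z, hz, ⟨i ≪≫ e⟩⟩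
  · rintro x y e ⟨z, hz, ⟨i⟩⟩; exact ⟨z, hz, ⟨i ≪≫ e⟩⟩
  · rintro a b ⟨x, hx, ⟨i⟩⟩ ⟨y, hy, ⟨j⟩⟩ f
    have hg : i.hom ≫ f ≫ j.inv = 0 := hom0 hx hy _
    calc f = i.inv ≫ (i.hom ≫ f ≫ j.inv) ≫ j.hom := by simp
      _ = 0 := by rw [hg, zero_comp, comp_zero]
  · intro M
    obtain ⟨x, y, f, g, w, hx, hy, hse⟩ := hXY.exists_ses (R.l.obj M)
    have hπ : ((ShortComplex.mk f g w).map R.π).ShortExact := hse.map_of_exact R.π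
    haveI : IsIso (R.adj_l.unit.app M) := inferInstance
    set u : M ≅ R.π.obj (R.l.obj M) := asIso (R.adj_l.unit.app M) with hu
    have w0 : (R.π.map f ≫ u.inv) ≫ (u.hom ≫ R.π.map g) = 0 := by
      rw [Category.assoc, Iso.inv_hom_id_assoc, ← Functor.map_comp, w, Functor.map_zero]
    refine ⟨R.π.obj x, R.π.obj y, R.π.map f ≫ u.inv, u.hom ≫ R.π.map g, w0,
      ⟨x, hx, ⟨Iso.refl _⟩⟩, ⟨y, hy, ⟨Iso.refl _⟩⟩, ?_⟩
    refine ShortComplex.shortExact_of_iso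
      (S₁ := (ShortComplex.mk f g w).map R.π) ?_ hπ
    refine ShortComplex.isoMk (Iso.refl _) u.symm (Iso.refl _) ?_ ?_
    · dsimp [ShortComplex.map]; simp
    · dsimp [ShortComplex.map]; simp

lemma statement6_r_of_tp {X Y : A → Prop} (hXY : IsTorsionPair X Y)
    (htp : IsTorsionPair (ImP R.π X) (ImP R.π Y)) :
    ∀ a : A, Y a → Y (R.r.obj (R.π.obj a)) := by
  intro y hy
  haveI : R.r.IsRightAdjoint := R.adj_r.isRightAdjoint
  obtain ⟨t, fr, m, e, w, ht, hfr, hse⟩ := hXY.exists_ses (R.r.obj (R.π.obj y))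
  haveI := hse.mono_f; haveI := hse.epi_g
  have hm0 : m = 0 := by
    have h1 : (R.adj_r.homEquiv t (R.π.obj y)).symm m = 0 :=
      htp.hom_zero ⟨t, ht, ⟨Iso.refl _⟩⟩ ⟨y, hy, ⟨Iso.refl _⟩⟩ _
    calc m = (R.adj_r.homEquiv _ _) ((R.adj_r.homEquiv _ _).symm m) :=
          (Equiv.apply_symm_apply _ _).symm
      _ = 0 := by rw [h1, Adjunction.homEquiv_apply, Functor.map_zero, comp_zero]
  have hzt : IsZero t := IsZero.of_mono_eq_zero m hm0
  haveI : IsIso e := hse.isIso_g_iff.2 hzt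
  exact hXY.f_iso (asIso e).symm hfr

lemma statement6_l_of_r {X Y : A → Prop} (hXY : IsTorsionPair X Y)
    (hr : ∀ a : A, Y a → Y (R.r.obj (R.π.obj a))) :
    ∀ a : A, X a → X (R.l.obj (R.π.obj a)) := by
  intro x hx
  haveI : R.l.IsLeftAdjoint := R.adj_l.isLeftAdjoint
  haveI : R.π.IsLeftAdjoint := R.adj_r.isLeftAdjoint
  haveI : R.π.IsRightAdjoint := R.adj_l.isRightAdjoint
  obtain ⟨t, fr, m, e, w, ht, hfr, hse⟩ := hXY.exists_ses (R.l.obj (R.π.obj x))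
  haveI := hse.mono_f; haveI := hse.epi_g
  have he0 : e = 0 := by
    have h3 : (R.adj_r.homEquiv x (R.π.obj fr)) (R.adj_l.homEquiv (R.π.obj x) fr e) = 0 :=
      hXY.hom_zero hx (hr fr hfr) _
    have h2 : R.adj_l.homEquiv (R.π.obj x) fr e = 0 := by
      have h4 := congrArg (R.adj_r.homEquiv x (R.π.obj fr)).symm h3
      rw [Equiv.symm_apply_apply, Adjunction.homEquiv_symm_apply, Functor.map_zero,
        zero_comp] at h4
      exact h4
    have h5 := congrArg (R.adj_l.homEquiv (R.π.obj x) fr).symm h2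
    rw [Equiv.symm_apply_apply, Adjunction.homEquiv_symm_apply, Functor.map_zero,
      zero_comp] at h5
    exact h5
  have hzfr : IsZero fr := IsZero.of_epi_eq_zero e he0
  haveI : IsIso m := hse.isIso_f_iff.2 hzfr
  exact hXY.t_iso (asIso m) ht

end Statement6Aux


/-- Psaroudakis. In a recollement of abelian categories
`R(A', A, A'')`, for any torsion pair `(X, Y)` in `A`: (i) `(q(X), p(Y))` is a
torsion pair in `A'`; (ii) `(π(X), π(Y))` is a torsion pair in `A''` iff
`ℓπ(X) ⊆ X` iff `rπ(Y) ⊆ Y`. -/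
theorem statement6
    {A' : Type u} [Category.{v} A'] [Abelian A']
    {A : Type u₁} [Category.{v₁} A] [Abelian A]
    {A'' : Type u₂} [Category.{v₂} A''] [Abelian A'']
    (R : RecollementData A' A A'')
    (X Y : A → Prop) (hXY : IsTorsionPair X Y) :
    IsTorsionPair (ImP R.q X) (ImP R.p Y) ∧
    (IsTorsionPair (ImP R.π X) (ImP R.π Y) ↔ ∀ a : A, X a → X (R.l.obj (R.π.obj a))) ∧
    (IsTorsionPair (ImP R.π X) (ImP R.π Y) ↔ ∀ a : A, Y a → Y (R.r.obj (R.π.obj a))) := by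
  refine ⟨statement6_part1 R hXY,
    ⟨fun htp => statement6_l_of_r R hXY (statement6_r_of_tp R hXY htp),
     fun hl => statement6_tp_of_l R hXY hl⟩,
    ⟨fun htp => statement6_r_of_tp R hXY htp,
     fun hr => statement6_tp_of_l R hXY (statement6_l_of_r R hXY hr)⟩⟩
end

section
/- In a recollement of abelian categories R(A', A, A''), given torsion pairs (X', Y') in A' and (X'', Y'') in A'', the pair (X, Y) defined by X = {A ∈ A : q(A) ∈ X', π(A) ∈ X''} and Y = {A ∈ A : p(A) ∈ Y', π(A) ∈ Y''} is a torsion pair in A which is compatible with the recollement (i.e., ℓπ(X) ⊆ X and rπ(Y) ⊆ Y). -/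
open CategoryTheory CategoryTheory.Limits CategoryTheory.Pretriangulated
  CategoryTheory.Triangulated ZeroObject

open Paper

universe v u v₁ u₁ v₂ u₂

section GlueAux

open CategoryTheory CategoryTheory.Limits

variable {C : Type*} [Category C] [Abelian C]

namespace TGlue

lemma isZero_of_mono_zero {X Y : C} (f : X ⟶ Y) [Mono f] (hf : f = 0) : IsZero X := by
  rw [IsZero.iff_id_eq_zero, ← cancel_mono f]
  simp [hf]

lemma isZero_of_epi_zero {X Y : C} (f : X ⟶ Y) [Epi f] (hf : f = 0) : IsZero Y := by
  rw [IsZero.iff_id_eq_zero, ← cancel_epi f]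
  simp [hf]

variable {T F : C → Prop}

lemma F_of_perp (h : Paper.IsTorsionPair T F) {M : C}
    (hp : ∀ Z : C, T Z → ∀ f : Z ⟶ M, f = 0) : F M := by
  obtain ⟨tA, fA, f, g, w, hT, hF, hse⟩ := h.exists_ses M
  haveI := hse.mono_f
  haveI := hse.epi_g
  have hf0 : f = 0 := hp _ hT f
  haveI : Mono g := hse.exact.mono_g hf0
  haveI : IsIso g := isIso_of_mono_of_epi g
  exact h.f_iso (asIso g).symm hF

lemma T_of_perp (h : Paper.IsTorsionPair T F) {M : C}
    (hp : ∀ Z : C, F Z → ∀ f : M ⟶ Z, f = 0) : T M := by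
  obtain ⟨tA, fA, f, g, w, hT, hF, hse⟩ := h.exists_ses M
  haveI := hse.mono_f
  haveI := hse.epi_g
  have hg0 : g = 0 := hp _ hF g
  haveI : Epi f := hse.exact.epi_f hg0
  haveI : IsIso f := isIso_of_mono_of_epi f
  exact h.t_iso (asIso f) hT

lemma T_quot (h : Paper.IsTorsionPair T F) {M N : C} (g : M ⟶ N) [Epi g] (hM : T M) : T N :=
  T_of_perp h fun _ hZ f => zero_of_epi_comp g (h.hom_zero hM hZ (g ≫ f))

lemma shortExact_of_mono {X Y : C} (f : X ⟶ Y) [Mono f] :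
    (ShortComplex.mk f (cokernel.π f) (cokernel.condition f)).ShortExact where
  exact := ShortComplex.exact_of_g_is_cokernel _ (cokernelIsCokernel f)
  mono_f := by dsimp; infer_instance
  epi_g := by dsimp; infer_instance

lemma shortExact_of_epi {X Y : C} (f : X ⟶ Y) [Epi f] :
    (ShortComplex.mk (kernel.ι f) f (kernel.condition f)).ShortExact where
  exact := ShortComplex.exact_of_f_is_kernel _ (kernelIsKernel f)
  mono_f := by dsimp; infer_instance
  epi_g := by dsimp; infer_instance

end TGlue

end GlueAux

section GlueMain

open CategoryTheory CategoryTheory.Limits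

set_option linter.unusedSectionVars false

namespace TGlue

universe x₁ x₂ x₃ x₄ x₅ x₆

variable {A' : Type x₁} [Category.{x₂} A'] [Abelian A']
  {A : Type x₃} [Category.{x₄} A] [Abelian A]
  {A'' : Type x₅} [Category.{x₆} A''] [Abelian A'']

variable (R : Paper.RecollementData A' A A'')

lemma pfl_pi : PreservesFiniteLimits R.π :=
  letI := R.adj_l.rightAdjoint_preservesLimits
  PreservesLimitsOfSize.preservesFiniteLimits.{0,0} _

lemma pfc_pi : PreservesFiniteColimits R.π :=
  letI := R.adj_r.leftAdjoint_preservesColimits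
  PreservesColimitsOfSize.preservesFiniteColimits.{0,0} _

lemma pfl_p : PreservesFiniteLimits R.p :=
  letI := R.adj_p.rightAdjoint_preservesLimits
  PreservesLimitsOfSize.preservesFiniteLimits.{0,0} _

lemma pi_zero_iota (Z : A') : IsZero (R.π.obj (R.ι.obj Z)) :=
  (R.im_eq_ker _).1 ⟨Z, ⟨Iso.refl _⟩⟩

lemma hom_l_iota_zero {x : A''} {F₀ : A'} (f : R.l.obj x ⟶ R.ι.obj F₀) : f = 0 := by
  haveI := R.adj_l.isLeftAdjoint
  have h0 : R.adj_l.homEquiv x (R.ι.obj F₀) f = 0 := (pi_zero_iota R F₀).eq_of_tgt _ _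
  calc f = (R.adj_l.homEquiv x (R.ι.obj F₀)).symm (R.adj_l.homEquiv x (R.ι.obj F₀) f) :=
        (Equiv.symm_apply_apply _ _).symm
    _ = 0 := by rw [h0, Adjunction.homEquiv_counit, Functor.map_zero, zero_comp]

lemma hom_iota_r_zero {x : A''} {F₀ : A'} (f : R.ι.obj F₀ ⟶ R.r.obj x) : f = 0 := by
  haveI := R.adj_r.isRightAdjoint
  have h0 : (R.adj_r.homEquiv (R.ι.obj F₀) x).symm f = 0 := (pi_zero_iota R F₀).eq_of_src _ _
  calc f = R.adj_r.homEquiv _ _ ((R.adj_r.homEquiv _ _).symm f) :=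
        (Equiv.apply_symm_apply _ _).symm
    _ = 0 := by rw [h0, Adjunction.homEquiv_unit, Functor.map_zero, comp_zero]

lemma glue_hom_zero {X' Y' : A' → Prop} {X'' Y'' : A'' → Prop}
    (h' : Paper.IsTorsionPair X' Y') (h'' : Paper.IsTorsionPair X'' Y'')
    {a b : A} (ha1 : X' (R.q.obj a)) (ha2 : X'' (R.π.obj a))
    (hb1 : Y' (R.p.obj b)) (hb2 : Y'' (R.π.obj b)) (f : a ⟶ b) : f = 0 := by
  haveI := R.ι_full; haveI := R.ι_faithful
  haveI := R.adj_r.isRightAdjoint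
  haveI := R.adj_l.isRightAdjoint
  haveI := R.adj_p.isLeftAdjoint
  haveI := R.adj_q.isLeftAdjoint
  haveI : PreservesFiniteLimits R.π := pfl_pi R
  set u : b ⟶ R.r.obj (R.π.obj b) := R.adj_r.unit.app b with hu
  have hfu : f ≫ u = 0 := by
    have h1 := R.adj_r.unit.naturality f
    dsimp at h1
    have h2 : R.π.map f = 0 := h''.hom_zero ha2 hb2 _
    rw [hu, h1, h2, Functor.map_zero, comp_zero]
  set k : a ⟶ kernel u := kernel.lift u f hfu with hk
  haveI : IsSplitMono (R.π.map u) :=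
    IsSplitMono.mk' ⟨R.adj_r.counit.app (R.π.obj b), R.adj_r.left_triangle_components b⟩
  have hπker : IsZero (R.π.obj (kernel u)) := by
    haveI := preserves_mono_of_preservesLimit R.π (kernel.ι u)
    have hz : R.π.map (kernel.ι u) = 0 := by
      apply zero_of_comp_mono (R.π.map u)
      rw [← Functor.map_comp, kernel.condition, Functor.map_zero]
    exact isZero_of_mono_zero _ hz
  obtain ⟨Ck, ⟨eI⟩⟩ := (R.im_eq_ker (kernel u)).2 hπker
  set g1 : a ⟶ R.ι.obj Ck := k ≫ eI.inv with hg1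
  set m1 : R.ι.obj Ck ⟶ b := eI.hom ≫ kernel.ι u with hm1
  have hfgm : f = g1 ≫ m1 := by
    rw [hg1, hm1, Category.assoc, Iso.inv_hom_id_assoc, hk, kernel.lift_ι]
  set g2 : R.q.obj a ⟶ Ck := (R.adj_q.homEquiv a Ck).symm g1 with hg2def
  set m2 : Ck ⟶ R.p.obj b := R.adj_p.homEquiv Ck b m1 with hm2def
  have hg2 : g1 = R.adj_q.unit.app a ≫ R.ι.map g2 := by
    rw [show g1 = R.adj_q.homEquiv a Ck g2 from (Equiv.apply_symm_apply _ _).symm,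
      Adjunction.homEquiv_unit]
  have hm2 : m1 = R.ι.map m2 ≫ R.adj_p.counit.app b := by
    rw [show m1 = (R.adj_p.homEquiv Ck b).symm m2 from (Equiv.symm_apply_apply _ _).symm,
      Adjunction.homEquiv_counit]
  have h0 : g2 ≫ m2 = 0 := h'.hom_zero ha1 hb1 _
  rw [hfgm, hg2, hm2]
  simp only [Category.assoc, ← Functor.map_comp_assoc, h0, Functor.map_zero, zero_comp, comp_zero]

lemma lemA {X' Y' : A' → Prop} (h' : Paper.IsTorsionPair X' Y') (c : A) :
    ∃ (d : A) (mp : d ⟶ c) (_ : Mono mp), IsZero (R.π.obj d) ∧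
      Y' (R.p.obj (cokernel mp)) ∧
      (∀ (F₀ : A'), Y' F₀ → ∀ φ : d ⟶ R.ι.obj F₀, φ = 0) := by
  haveI := R.ι_full; haveI := R.ι_faithful
  haveI := R.adj_l.isRightAdjoint
  haveI := R.adj_r.isLeftAdjoint
  haveI := R.adj_r.isRightAdjoint
  haveI := R.adj_p.isRightAdjoint
  haveI := R.adj_p.isLeftAdjoint
  haveI := R.adj_q.isRightAdjoint
  haveI := R.adj_q.isLeftAdjoint
  haveI : PreservesFiniteLimits R.π := pfl_pi R
  haveI : PreservesFiniteColimits R.π := pfc_pi R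
  haveI : PreservesFiniteLimits R.p := pfl_p R
  obtain ⟨x', y', f₂, g₂, w₂, hx', hy', hse₂⟩ := h'.exists_ses (R.p.obj c)
  haveI := hse₂.mono_f
  haveI := hse₂.epi_g
  set ψ : R.ι.obj x' ⟶ c := R.ι.map f₂ ≫ R.adj_p.counit.app c with hψdef
  set mp : Abelian.image ψ ⟶ c := Abelian.image.ι ψ with hmpdef
  set ep : R.ι.obj x' ⟶ Abelian.image ψ := Abelian.factorThruImage ψ with hepdef
  have hfac : ep ≫ mp = ψ := Abelian.image.fac ψ
  have hπd : IsZero (R.π.obj (Abelian.image ψ)) :=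
    isZero_of_epi_zero (R.π.map ep) ((pi_zero_iota R x').eq_of_src _ _)
  obtain ⟨d₁, ⟨γ⟩⟩ := (R.im_eq_ker (Abelian.image ψ)).2 hπd
  set v : x' ⟶ d₁ := R.ι.preimage (ep ≫ γ.inv) with hvdef
  have hv : R.ι.map v = ep ≫ γ.inv := R.ι.map_preimage _
  haveI : Epi v := by
    apply R.ι.epi_of_epi_map
    rw [hv]; infer_instance
  have hd₁ : X' d₁ := T_quot h' v hx'
  have hpd : X' (R.p.obj (Abelian.image ψ)) := by
    haveI : IsIso (R.adj_p.unit.app d₁) := inferInstance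
    exact h'.t_iso ((asIso (R.adj_p.unit.app d₁)) ≪≫ R.p.mapIso γ) hd₁
  set pm : R.p.obj (Abelian.image ψ) ⟶ R.p.obj c := R.p.map mp with hpmdef
  haveI : Mono pm := inferInstance
  set j : x' ⟶ R.p.obj (Abelian.image ψ) := R.adj_p.unit.app x' ≫ R.p.map ep with hjdef
  have hj : j ≫ pm = f₂ := by
    rw [hjdef, hpmdef, Category.assoc, ← R.p.map_comp, hfac, hψdef, R.p.map_comp]
    have hnat := R.adj_p.unit.naturality f₂
    dsimp at hnat
    rw [← Category.assoc, ← hnat, Category.assoc, R.adj_p.right_triangle_components,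
      Category.comp_id]
  have hpm_g₂ : pm ≫ g₂ = 0 := h'.hom_zero hpd hy' _
  obtain ⟨k', hk'⟩ := KernelFork.IsLimit.lift' hse₂.fIsKernel pm hpm_g₂
  have hk'2 : k' ≫ f₂ = pm := hk'
  have hf₂π : f₂ ≫ cokernel.π pm = 0 := by
    rw [← hj, Category.assoc, cokernel.condition, comp_zero]
  obtain ⟨w₂', hw₂'⟩ := CokernelCofork.IsColimit.desc' hse₂.gIsCokernel (cokernel.π pm) hf₂π
  have hw₂'2 : g₂ ≫ w₂' = cokernel.π pm := hw₂'
  have hq1 : w₂' ≫ cokernel.desc pm g₂ hpm_g₂ = 𝟙 y' := by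
    rw [← cancel_epi g₂, ← Category.assoc, hw₂'2, cokernel.π_desc, Category.comp_id]
  have hq2 : cokernel.desc pm g₂ hpm_g₂ ≫ w₂' = 𝟙 _ := by
    rw [← cancel_epi (cokernel.π pm), ← Category.assoc, cokernel.π_desc, hw₂'2, Category.comp_id]
  have hQ : Y' (cokernel pm) := h'.f_iso (Iso.mk w₂' (cokernel.desc pm g₂ hpm_g₂) hq1 hq2) hy'
  have hmain : Y' (R.p.obj (cokernel mp)) := by
    apply F_of_perp h'
    intro T hT ht
    set qe : c ⟶ cokernel mp := cokernel.π mp with hqedef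
    set hm : R.ι.obj T ⟶ cokernel mp := (R.adj_p.homEquiv T (cokernel mp)).symm ht with hhdef
    haveI : Epi (pullback.snd qe hm) := inferInstance
    have hkdw : mp ≫ qe = 0 ≫ hm := by rw [hqedef, cokernel.condition, zero_comp]
    set kd : Abelian.image ψ ⟶ pullback qe hm := pullback.lift mp 0 hkdw with hkddef
    have hkd1 : kd ≫ pullback.fst qe hm = mp := pullback.lift_fst _ _ _
    have hkd2 : kd ≫ pullback.snd qe hm = 0 := pullback.lift_snd _ _ _
    haveI : Mono kd := mono_of_mono_fac hkd1
    have hkdK : IsLimit (KernelFork.ofι kd hkd2) := by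
      refine KernelFork.IsLimit.ofι' kd hkd2 (fun {Z} z hz => ?_)
      refine ⟨Abelian.monoLift mp (z ≫ pullback.fst qe hm) ?_, ?_⟩
      · rw [Category.assoc, pullback.condition, ← Category.assoc, hz, zero_comp]
      · apply pullback.hom_ext
        · rw [Category.assoc, hkd1, Abelian.monoLift_comp]
        · rw [Category.assoc, hkd2, comp_zero]
          exact hz.symm
    have hseP : (ShortComplex.mk kd (pullback.snd qe hm) hkd2).ShortExact :=
      { exact := ShortComplex.exact_of_f_is_kernel _ hkdK
        mono_f := by dsimp; infer_instance
        epi_g := by dsimp; infer_instance }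
    have hπP : IsZero (R.π.obj (pullback qe hm)) := by
      have hsePπ := hseP.map_of_exact R.π
      have h1 : R.π.map kd = 0 := hπd.eq_of_src _ _
      haveI : Mono (R.π.map (pullback.snd qe hm)) := hsePπ.exact.mono_g h1
      exact isZero_of_mono_zero (R.π.map (pullback.snd qe hm)) ((pi_zero_iota R T).eq_of_tgt _ _)
    obtain ⟨W, ⟨α⟩⟩ := (R.im_eq_ker (pullback qe hm)).2 hπP
    set ρ₁ : W ⟶ T := R.ι.preimage (α.hom ≫ pullback.snd qe hm) with hρdef
    have hρ : R.ι.map ρ₁ = α.hom ≫ pullback.snd qe hm := R.ι.map_preimage _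
    haveI : Epi ρ₁ := by
      apply R.ι.epi_of_epi_map
      rw [hρ]; infer_instance
    set δ : d₁ ⟶ W := R.ι.preimage (γ.hom ≫ kd ≫ α.inv) with hδdef
    have hδ : R.ι.map δ = γ.hom ≫ kd ≫ α.inv := R.ι.map_preimage _
    have hδρ : δ ≫ ρ₁ = 0 := by
      apply R.ι.map_injective
      rw [R.ι.map_comp, hδ, hρ, Functor.map_zero]
      simp [hkd2]
    haveI : Mono δ := by
      apply R.ι.mono_of_mono_map
      rw [hδ]
      exact mono_comp _ _
    have hδK : IsLimit (KernelFork.ofι δ hδρ) := by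
      refine KernelFork.IsLimit.ofι' δ hδρ (fun {Z} z hz => ?_)
      have hz2 : (R.ι.map z ≫ α.hom) ≫ pullback.snd qe hm = 0 := by
        rw [Category.assoc, ← hρ, ← R.ι.map_comp, hz, Functor.map_zero]
      obtain ⟨l, hl⟩ := KernelFork.IsLimit.lift' hkdK (R.ι.map z ≫ α.hom) hz2
      have hl2 : l ≫ kd = R.ι.map z ≫ α.hom := hl
      refine ⟨R.ι.preimage (l ≫ γ.inv), ?_⟩
      apply R.ι.map_injective
      rw [R.ι.map_comp, R.ι.map_preimage, hδ]
      rw [Category.assoc, Iso.inv_hom_id_assoc, ← Category.assoc, hl2, Category.assoc,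
        Iso.hom_inv_id, Category.comp_id]
    have hρCo : IsColimit (CokernelCofork.ofπ ρ₁ hδρ) := Abelian.epiIsCokernelOfKernel _ hδK
    set m : W ⟶ R.p.obj c := R.adj_p.homEquiv W c (α.hom ≫ pullback.fst qe hm) with hmdef
    have e2 : R.ι.map δ ≫ (α.hom ≫ pullback.fst qe hm) = γ.hom ≫ mp := by
      rw [hδ]
      simp [hkd1]
    have e3 : δ ≫ m = R.adj_p.homEquiv d₁ c (γ.hom ≫ mp) := by
      rw [← e2, Adjunction.homEquiv_naturality_left, hmdef]
    have hδm : δ ≫ (m ≫ cokernel.π pm) = 0 := by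
      rw [← Category.assoc, e3, Adjunction.homEquiv_naturality_right, hpmdef, Category.assoc,
        cokernel.condition, comp_zero]
    obtain ⟨wbar, hwbar⟩ := CokernelCofork.IsColimit.desc' hρCo (m ≫ cokernel.π pm) hδm
    have hwbar2 : ρ₁ ≫ wbar = m ≫ cokernel.π pm := hwbar
    have hwbar0 : wbar = 0 := h'.hom_zero hT hQ wbar
    have hmc : m ≫ cokernel.π pm = 0 := by rw [← hwbar2, hwbar0, comp_zero]
    have hmqe : m ≫ R.p.map qe = 0 := by
      rw [← Abelian.monoLift_comp pm m hmc, Category.assoc, ← R.p.map_comp, hqedef,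
        cokernel.condition, Functor.map_zero, comp_zero]
    have e4 : R.adj_p.homEquiv W (cokernel mp) ((α.hom ≫ pullback.fst qe hm) ≫ qe) = 0 := by
      rw [Adjunction.homEquiv_naturality_right, ← hmdef]
      exact hmqe
    have e5 : (α.hom ≫ pullback.fst qe hm) ≫ qe = 0 := by
      apply (R.adj_p.homEquiv W (cokernel mp)).injective
      rw [e4, Adjunction.homEquiv_unit, Functor.map_zero, comp_zero]
    have e6 : α.hom ≫ pullback.snd qe hm ≫ hm = 0 := by
      rw [← pullback.condition, ← Category.assoc]
      exact e5
    have e7 : hm = 0 := by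
      rw [← cancel_epi (pullback.snd qe hm), ← cancel_epi α.hom, comp_zero, comp_zero]
      exact e6
    have e8 : ht = R.adj_p.homEquiv T (cokernel mp) hm := (Equiv.apply_symm_apply _ _).symm
    rw [e8, e7, Adjunction.homEquiv_unit, Functor.map_zero, comp_zero]
  refine ⟨Abelian.image ψ, mp, inferInstance, hπd, hmain, ?_⟩
  intro F₀ hF₀ φ
  have hω : R.ι.preimage (γ.hom ≫ φ) = 0 := h'.hom_zero hd₁ hF₀ _
  have hγφ : γ.hom ≫ φ = 0 := by
    rw [← R.ι.map_preimage (γ.hom ≫ φ), hω, Functor.map_zero]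
  rw [← cancel_epi γ.hom, hγφ, comp_zero]

open scoped Pseudoelement in
lemma glue_exists_ses {X' Y' : A' → Prop} {X'' Y'' : A'' → Prop}
    (h' : Paper.IsTorsionPair X' Y') (h'' : Paper.IsTorsionPair X'' Y'') (a : A) :
    ∃ (t e : A) (f : t ⟶ a) (g : a ⟶ e) (w : f ≫ g = 0),
      (X' (R.q.obj t) ∧ X'' (R.π.obj t)) ∧ (Y' (R.p.obj e) ∧ Y'' (R.π.obj e)) ∧
      (ShortComplex.mk f g w).ShortExact := by
  haveI := R.ι_full; haveI := R.ι_faithful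
  haveI := R.l_full; haveI := R.l_faithful
  haveI := R.adj_l.isRightAdjoint
  haveI := R.adj_l.isLeftAdjoint
  haveI := R.adj_r.isLeftAdjoint
  haveI := R.adj_p.isRightAdjoint
  haveI := R.adj_p.isLeftAdjoint
  haveI := R.adj_q.isRightAdjoint
  haveI := R.adj_q.isLeftAdjoint
  haveI : PreservesFiniteLimits R.π := pfl_pi R
  haveI : PreservesFiniteColimits R.π := pfc_pi R
  obtain ⟨x'', y'', f₁, g₁, w₁, hx'', hy'', hse₁⟩ := h''.exists_ses (R.π.obj a)
  haveI := hse₁.mono_f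
  haveI := hse₁.epi_g
  set ξ : R.l.obj x'' ⟶ a := R.l.map f₁ ≫ R.adj_l.counit.app a with hξdef
  set eξ : R.l.obj x'' ⟶ Abelian.image ξ := Abelian.factorThruImage ξ with heξ
  set mi : Abelian.image ξ ⟶ a := Abelian.image.ι ξ with hmi
  have hfacξ : eξ ≫ mi = ξ := Abelian.image.fac ξ
  set pc : a ⟶ cokernel mi := cokernel.π mi with hpc
  obtain ⟨d, mp, hmono, hπd, hpeY, hdhom⟩ := lemA R h' (cokernel mi)
  haveI := hmono
  set qe : cokernel mi ⟶ cokernel mp := cokernel.π mp with hqe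
  set θ : a ⟶ cokernel mp := pc ≫ qe with hθ
  haveI : Epi θ := by rw [hθ]; exact epi_comp _ _
  have hmiθ : mi ≫ θ = 0 := by rw [hθ, ← Category.assoc, hpc, cokernel.condition, zero_comp]
  set j₁ : Abelian.image ξ ⟶ kernel θ := kernel.lift θ mi hmiθ with hj₁
  have hj₁kt : j₁ ≫ kernel.ι θ = mi := kernel.lift_ι _ _ _
  haveI : Mono j₁ := mono_of_mono_fac hj₁kt
  have hv'w : (kernel.ι θ ≫ pc) ≫ qe = 0 := by
    rw [Category.assoc, ← hθ]
    exact kernel.condition θ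
  set v' : kernel θ ⟶ d := Abelian.monoLift mp (kernel.ι θ ≫ pc) hv'w with hv'
  have hv'mp : v' ≫ mp = kernel.ι θ ≫ pc := Abelian.monoLift_comp _ _ _
  have hj₁v' : j₁ ≫ v' = 0 := by
    rw [← cancel_mono mp, Category.assoc, hv'mp, ← Category.assoc, hj₁kt, hpc,
      cokernel.condition, zero_comp]
  haveI : Epi v' := by
    apply Abelian.Pseudoelement.epi_of_pseudo_surjective
    intro dd
    obtain ⟨aa, haa⟩ := Abelian.Pseudoelement.pseudo_surjective_of_epi pc (mp dd)
    have hθaa : θ aa = 0 := by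
      rw [hθ, Abelian.Pseudoelement.comp_apply, haa, ← Abelian.Pseudoelement.comp_apply,
        hqe, cokernel.condition, Abelian.Pseudoelement.zero_apply]
    obtain ⟨tt, htt⟩ :=
      Abelian.Pseudoelement.pseudo_exact_of_exact (shortExact_of_epi θ).exact aa hθaa
    refine ⟨tt, Abelian.Pseudoelement.pseudo_injective_of_mono mp ?_⟩
    rw [← Abelian.Pseudoelement.comp_apply, hv'mp, Abelian.Pseudoelement.comp_apply, htt, haa]
  have hexB : (ShortComplex.mk j₁ v' hj₁v').Exact := by
    apply Abelian.Pseudoelement.exact_of_pseudo_exact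
    intro tt htt
    have h1 : pc ((kernel.ι θ) tt) = 0 := by
      rw [← Abelian.Pseudoelement.comp_apply, ← hv'mp, Abelian.Pseudoelement.comp_apply, htt,
        Abelian.Pseudoelement.apply_zero]
    obtain ⟨a₁, ha₁⟩ := Abelian.Pseudoelement.pseudo_exact_of_exact
      (shortExact_of_mono mi).exact ((kernel.ι θ) tt) h1
    refine ⟨a₁, Abelian.Pseudoelement.pseudo_injective_of_mono (kernel.ι θ) ?_⟩
    rw [← Abelian.Pseudoelement.comp_apply, hj₁kt]
    exact ha₁
  have hseB : (ShortComplex.mk j₁ v' hj₁v').ShortExact :=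
    { exact := hexB
      mono_f := by dsimp; infer_instance
      epi_g := by dsimp; infer_instance }
  have hXπt : X'' (R.π.obj (kernel θ)) := by
    apply T_of_perp h''
    intro G hG φ
    have hsePB := hseB.map_of_exact R.π
    have hπv'0 : R.π.map v' = 0 := hπd.eq_of_tgt _ _
    haveI : Epi (R.π.map j₁) := hsePB.exact.epi_f hπv'0
    haveI : Epi (R.π.map eξ ≫ R.π.map j₁) := epi_comp _ _
    have hcomp : (R.adj_l.unit.app x'' ≫ ((R.π.map eξ ≫ R.π.map j₁) ≫ φ)) = 0 :=
      h''.hom_zero hx'' hG _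
    haveI : IsIso (R.adj_l.unit.app x'') := inferInstance
    have h2 : (R.π.map eξ ≫ R.π.map j₁) ≫ φ = 0 := by
      rw [← cancel_epi (R.adj_l.unit.app x''), comp_zero]
      exact hcomp
    exact zero_of_epi_comp _ h2
  have hunitξ : R.adj_l.unit.app x'' ≫ R.π.map ξ = f₁ := by
    rw [hξdef, R.π.map_comp]
    have hnat := R.adj_l.unit.naturality f₁
    dsimp at hnat
    rw [← Category.assoc, ← hnat, Category.assoc, R.adj_l.right_triangle_components,
      Category.comp_id]
  have hζ₁mi : (R.adj_l.unit.app x'' ≫ R.π.map eξ) ≫ R.π.map mi = f₁ := by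
    rw [Category.assoc, ← R.π.map_comp, hfacξ, hunitξ]
  haveI : IsIso (R.adj_l.unit.app x'') := inferInstance
  have hh2 : R.π.map ξ ≫ g₁ = 0 := by
    rw [← cancel_epi (R.adj_l.unit.app x''), comp_zero, ← Category.assoc, hunitξ, w₁]
  have hπmi_g₁ : R.π.map mi ≫ g₁ = 0 := by
    rw [← cancel_epi (R.π.map eξ), comp_zero, ← Category.assoc, ← R.π.map_comp, hfacξ, hh2]
  have hseC := (shortExact_of_mono mi).map_of_exact R.π
  obtain ⟨u₁, hu₁⟩ : ∃ u₁ : R.π.obj (cokernel mi) ⟶ y'', R.π.map pc ≫ u₁ = g₁ :=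
    ⟨_, (CokernelCofork.IsColimit.desc' hseC.gIsCokernel g₁ hπmi_g₁).2⟩
  have hu₁2 : R.π.map pc ≫ u₁ = g₁ := hu₁
  have hf₁pc : f₁ ≫ R.π.map pc = 0 := by
    rw [← hζ₁mi, Category.assoc, ← R.π.map_comp, hpc, cokernel.condition, Functor.map_zero,
      comp_zero]
  obtain ⟨u₂, hu₂⟩ : ∃ u₂ : y'' ⟶ R.π.obj (cokernel mi), g₁ ≫ u₂ = R.π.map pc :=
    ⟨_, (CokernelCofork.IsColimit.desc' hse₁.gIsCokernel (R.π.map pc) hf₁pc).2⟩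
  have hu₂2 : g₁ ≫ u₂ = R.π.map pc := hu₂
  haveI : Epi (R.π.map pc) := inferInstance
  have hu12 : u₂ ≫ u₁ = 𝟙 _ := by
    rw [← cancel_epi g₁, ← Category.assoc, hu₂2, hu₁2]
    exact (Category.comp_id _).symm
  have hu21 : u₁ ≫ u₂ = 𝟙 _ := by
    rw [← cancel_epi (R.π.map pc), ← Category.assoc, hu₁2, hu₂2]
    exact (Category.comp_id _).symm
  have hYπc : Y'' (R.π.obj (cokernel mi)) := h''.f_iso (Iso.mk u₂ u₁ hu12 hu21) hy''
  have hseD := (shortExact_of_mono mp).map_of_exact R.π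
  haveI : IsIso (R.π.map qe) := hseD.isIso_g_iff.2 hπd
  have hYπe : Y'' (R.π.obj (cokernel mp)) := h''.f_iso (asIso (R.π.map qe)) hYπc
  have hXqt : X' (R.q.obj (kernel θ)) := by
    apply T_of_perp h'
    intro F₀ hF₀ φ
    have h1 : eξ ≫ (j₁ ≫ R.adj_q.homEquiv _ F₀ φ) = 0 := hom_l_iota_zero R _
    have h2 : j₁ ≫ R.adj_q.homEquiv _ F₀ φ = 0 := zero_of_epi_comp eξ h1
    obtain ⟨φ'', hφ''⟩ := CokernelCofork.IsColimit.desc' hseB.gIsCokernel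
      (R.adj_q.homEquiv _ F₀ φ) h2
    have hφ''2 : v' ≫ φ'' = R.adj_q.homEquiv _ F₀ φ := hφ''
    have hz : φ'' = 0 := hdhom F₀ hF₀ φ''
    have hφ'0 : R.adj_q.homEquiv _ F₀ φ = 0 := by rw [← hφ''2, hz, comp_zero]
    have e : φ = (R.adj_q.homEquiv _ F₀).symm (R.adj_q.homEquiv _ F₀ φ) :=
      (Equiv.symm_apply_apply _ _).symm
    rw [e, hφ'0, Adjunction.homEquiv_counit, Functor.map_zero, zero_comp]
  exact ⟨kernel θ, cokernel mp, kernel.ι θ, θ, kernel.condition θ,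
    ⟨hXqt, hXπt⟩, ⟨hpeY, hYπe⟩, shortExact_of_epi θ⟩

end TGlue

end GlueMain

/-- Psaroudakis; gluing of torsion pairs. In a recollement
of abelian categories `R(A', A, A'')`, torsion pairs `(X', Y')` in `A'` and
`(X'', Y'')` in `A''` glue to the torsion pair
`X = {a | q(a) ∈ X', π(a) ∈ X''}`, `Y = {a | p(a) ∈ Y', π(a) ∈ Y''}` in `A`,
compatible with the recollement: `ℓπ(X) ⊆ X` and `rπ(Y) ⊆ Y`. -/
theorem statement7
    {A' : Type u} [Category.{v} A'] [Abelian A']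
    {A : Type u₁} [Category.{v₁} A] [Abelian A]
    {A'' : Type u₂} [Category.{v₂} A''] [Abelian A'']
    (R : RecollementData A' A A'')
    (X' Y' : A' → Prop) (X'' Y'' : A'' → Prop)
    (h' : IsTorsionPair X' Y') (h'' : IsTorsionPair X'' Y'') :
    IsTorsionPair (fun a : A => X' (R.q.obj a) ∧ X'' (R.π.obj a))
        (fun a : A => Y' (R.p.obj a) ∧ Y'' (R.π.obj a)) ∧
    (∀ a : A, (X' (R.q.obj a) ∧ X'' (R.π.obj a)) →
      (X' (R.q.obj (R.l.obj (R.π.obj a))) ∧ X'' (R.π.obj (R.l.obj (R.π.obj a))))) ∧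
    (∀ a : A, (Y' (R.p.obj a) ∧ Y'' (R.π.obj a)) →
      (Y' (R.p.obj (R.r.obj (R.π.obj a))) ∧ Y'' (R.π.obj (R.r.obj (R.π.obj a))))) := by
  refine ⟨?_, ?_, ?_⟩
  · exact
      { t_iso := fun i hX => ⟨h'.t_iso (R.q.mapIso i) hX.1, h''.t_iso (R.π.mapIso i) hX.2⟩
        f_iso := fun i hY => ⟨h'.f_iso (R.p.mapIso i) hY.1, h''.f_iso (R.π.mapIso i) hY.2⟩
        hom_zero := fun hX hY f => TGlue.glue_hom_zero R h' h'' hX.1 hX.2 hY.1 hY.2 f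
        exists_ses := by
          intro a
          obtain ⟨t, e, f, g, w, hX, hY, hse⟩ := TGlue.glue_exists_ses R h' h'' a
          exact ⟨t, e, f, g, w, hX, hY, hse⟩ }
  · rintro a ⟨ha1, ha2⟩
    constructor
    · apply TGlue.T_of_perp h'
      intro F₀ hF₀ φ
      haveI := R.adj_q.isLeftAdjoint
      have h0 : R.adj_q.homEquiv _ F₀ φ = 0 := TGlue.hom_l_iota_zero R _
      have e : φ = (R.adj_q.homEquiv _ F₀).symm (R.adj_q.homEquiv _ F₀ φ) :=
        (Equiv.symm_apply_apply _ _).symm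
      rw [e, h0, Adjunction.homEquiv_counit, Functor.map_zero, zero_comp]
    · haveI := R.l_full; haveI := R.l_faithful
      exact h''.t_iso (asIso (R.adj_l.unit.app (R.π.obj a))) ha2
  · rintro a ⟨ha1, ha2⟩
    constructor
    · apply TGlue.F_of_perp h'
      intro T hT φ
      haveI := R.adj_p.isRightAdjoint
      have h0 : (R.adj_p.homEquiv T _).symm φ = 0 := TGlue.hom_iota_r_zero R _
      have e : φ = (R.adj_p.homEquiv T _) ((R.adj_p.homEquiv T _).symm φ) :=
        (Equiv.apply_symm_apply _ _).symm
      rw [e, h0, Adjunction.homEquiv_unit, Functor.map_zero, comp_zero]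
    · haveI := R.r_full; haveI := R.r_faithful
      exact h''.f_iso (asIso (R.adj_r.counit.app (R.π.obj a))).symm ha2
end

section
/- There is a canonical bijection between the set of silting objects of per(eΓe) and the set of V-perpendicular partial silting objects of per(Γ), where V = pvd(Γ_I): every silting object of per(eΓe), viewed inside per(Γ) via the fully faithful functor ℓ, is a partial silting object X with Hom(X, V) = 0 and thick(X) = ^⊥V, and conversely. -/
open CategoryTheory CategoryTheory.Limits CategoryTheory.Pretriangulated
  CategoryTheory.Triangulated ZeroObject

section SiltingDefs

open Paper

variable {PP : Type*} [Category PP] [Preadditive PP] [HasZeroObject PP] [HasShift PP ℤ]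
  [∀ n : ℤ, (shiftFunctor PP n).Additive] [Pretriangulated PP] [HasBinaryBiproducts PP]

/-- `Hom^{>0}(X, Y) = 0`. -/
def NoPosExt (X Y : PP) : Prop := ∀ m : ℤ, 0 < m → ∀ f : X ⟶ Y⟦m⟧, f = 0

/-- An indecomposable (nonzero) object. -/
def IndecObj (X : PP) : Prop :=
  ¬ IsZero X ∧ ∀ (A B : PP), (X ≅ A ⊞ B) → IsZero A ∨ IsZero B

/-- A (basic) partial silting object, presented as a family of pairwise
non-isomorphic indecomposable summands with no positive self-extensions. -/
structure IsPartialSiltingFam {n : ℕ} (Y : Fin n → PP) : Prop where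
  indec : ∀ i, IndecObj (Y i)
  pairwise_noniso : ∀ i j, i ≠ j → IsEmpty (Y i ≅ Y j)
  no_pos_ext : ∀ i j, NoPosExt (Y i) (Y j)

/-- A (basic) silting object: a partial silting family which generates. -/
def IsSiltingFam {n : ℕ} (Y : Fin n → PP) : Prop :=
  IsPartialSiltingFam Y ∧ ∀ X : PP, ThickClos (fun Z => ∃ i, Z = Y i) X

/-- `f : X ⟶ B` is a minimal left approximation of `X` by the class `A`. -/
def MinLeftApprox (X : PP) (A : PP → Prop) {B : PP} (f : X ⟶ B) : Prop :=
  A B ∧ (∀ B' : PP, A B' → ∀ g : X ⟶ B', ∃ h : B ⟶ B', f ≫ h = g) ∧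
  (∀ h : B ⟶ B, f ≫ h = f → IsIso h)

/-- Forward silting mutation at the `kk`-th summand: the summand is replaced
by the cone of its minimal left approximation by the additive closure of the
other summands. -/
def ForwardMutationAt {n : ℕ} (Y Y' : Fin n → PP) (kk : Fin n) : Prop :=
  (∀ i, i ≠ kk → Y' i = Y i) ∧
  ∃ (B : PP) (f : Y kk ⟶ B) (g : B ⟶ Y' kk) (h : Y' kk ⟶ (Y kk)⟦(1 : ℤ)⟧),
    MinLeftApprox (Y kk) (AddClos (fun Z => ∃ i, i ≠ kk ∧ Z = Y i)) f ∧
    Triangle.mk f g h ∈ distTriang PP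

/-- Two families present the same silting object (up to permutation and
isomorphism of the summands). -/
def SiltFamEquiv {n : ℕ} (Y Y' : Fin n → PP) : Prop :=
  ∃ σ : Equiv.Perm (Fin n), ∀ i, Nonempty (Y (σ i) ≅ Y' i)

/-- A forward mutation edge. -/
def MutEdge {n : ℕ} (Y Y' : Fin n → PP) : Prop := ∃ kk, ForwardMutationAt Y Y' kk

/-- Connectedness to the distinguished silting object by mutations. -/
def SiltReach {n : ℕ} (Y₀ Y : Fin n → PP) : Prop :=
  Relation.ReflTransGen (fun a b => MutEdge a b ∨ MutEdge b a ∨ SiltFamEquiv a b) Y₀ Y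

/-- Underlying silting families of the principal component `SEG°`. -/
abbrev SEGVert {n : ℕ} (Y₀ : Fin n → PP) : Type _ :=
  {Y : Fin n → PP // IsSiltingFam Y ∧ SiltReach Y₀ Y}

/-- The relation identifying families presenting the same silting object. -/
def SEGRel {n : ℕ} (Y₀ : Fin n → PP) (a b : SEGVert Y₀) : Prop := SiltFamEquiv a.1 b.1

/-- Vertices of the principal component `SEG°` of the silting exchange graph. -/
abbrev SEGV {n : ℕ} (Y₀ : Fin n → PP) : Type _ := Quot (SEGRel Y₀)

/-- Edges of `SEG°`: forward silting mutations. -/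
def SEGEdge {n : ℕ} (Y₀ : Fin n → PP) (x y : SEGV Y₀) : Prop :=
  ∃ a b : SEGVert Y₀, Quot.mk (SEGRel Y₀) a = x ∧ Quot.mk (SEGRel Y₀) b = y ∧
    MutEdge a.1 b.1

/-- The square of the radical: the span of compositions of two non-invertible
maps between summands. -/
def RadSq (k : Type*) [Field k] [CategoryTheory.Linear k PP] {n : ℕ}
    (Y : Fin n → PP) (a b : Fin n) : Submodule k (Y a ⟶ Y b) :=
  Submodule.span k {f : Y a ⟶ Y b | ∃ (l : Fin n) (u : Y a ⟶ Y l) (v : Y l ⟶ Y b),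
    ¬ IsIso u ∧ ¬ IsIso v ∧ f = u ≫ v}

/-- The dimension of the space `Irr(Y a, Y b)` of irreducible maps. -/
noncomputable def IrrDim (k : Type*) [Field k] [CategoryTheory.Linear k PP] {n : ℕ}
    (Y : Fin n → PP) (a b : Fin n) : ℕ :=
  Module.finrank k ((Y a ⟶ Y b) ⧸ RadSq k Y a b)

end SiltingDefs

open Paper

universe v u v₁ u₁

section Aux18

variable {P : Type u} [Category.{v} P] [Preadditive P] [HasZeroObject P] [HasShift P ℤ]
  [∀ n : ℤ, (shiftFunctor P n).Additive] [Pretriangulated P]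
  {PE : Type u₁} [Category.{v₁} PE] [Preadditive PE] [HasZeroObject PE] [HasShift PE ℤ]
  [∀ n : ℤ, (shiftFunctor PE n).Additive] [Pretriangulated PE]

lemma thickClos_iso (S : P → Prop) {X Y : P} (e : X ≅ Y) (h : ThickClos S X) :
    ThickClos S Y :=
  ThickClos.retract Y X e.inv e.hom e.inv_hom_id h

lemma isZero_of_map_isZero (ℓ : PE ⥤ P) [ℓ.Additive] [ℓ.Faithful] {W : PE}
    (h : IsZero (ℓ.obj W)) : IsZero W := by
  rw [IsZero.iff_id_eq_zero] at h ⊢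
  apply ℓ.map_injective
  rw [ℓ.map_id, ℓ.map_zero, h]

/-- A fully faithful additive functor preserves binary biproducts (explicit iso). -/
noncomputable def mapBiprodIso (ℓ : PE ⥤ P) [ℓ.Additive] [HasBinaryBiproducts P]
    [HasBinaryBiproducts PE] (A B : PE) : ℓ.obj (A ⊞ B) ≅ ℓ.obj A ⊞ ℓ.obj B where
  hom := biprod.lift (ℓ.map biprod.fst) (ℓ.map biprod.snd)
  inv := biprod.desc (ℓ.map biprod.inl) (ℓ.map biprod.inr)
  hom_inv_id := by
    rw [biprod.lift_desc, ← ℓ.map_comp, ← ℓ.map_comp, ← ℓ.map_add, biprod.total, ℓ.map_id]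
  inv_hom_id := by
    ext <;> simp [← ℓ.map_comp]

lemma perp_of_thickClos (V : P → Prop) (hV : IsThick V) (S : P → Prop)
    (hS : ∀ s, S s → ∀ v : P, V v → ∀ f : s ⟶ v, f = 0) {Z : P}
    (h : ThickClos S Z) : ∀ v : P, V v → ∀ f : Z ⟶ v, f = 0 := by
  induction h with
  | of X hX => exact hS X hX
  | zero X hX => exact fun v hv f => hX.eq_of_src f 0
  | shift X n _ ih =>
      intro v hv f
      set e := shiftFunctorCompIsoId P n (-n) (by omega) with he
      have h0 : e.inv.app X ≫ (shiftFunctor P (-n)).map f = 0 :=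
        ih _ (hV.shift v (-n) hv) _
      have hf : (shiftFunctor P (-n)).map f = 0 := by
        rw [← cancel_epi (e.inv.app X), h0, comp_zero]
      apply (shiftFunctor P (-n)).map_injective
      rw [hf, Functor.map_zero]
  | ext A E B f g h hT _ _ ihA ihB =>
      intro v hv φ
      obtain ⟨ψ, hψ⟩ := Pretriangulated.Triangle.yoneda_exact₂ _ hT φ (ihA v hv _)
      rw [hψ, ihB v hv ψ]; exact comp_zero
  | retract X Z i p hip _ ih =>
      intro v hv f
      have h0 : p ≫ f = 0 := ih v hv _
      rw [← Category.id_comp f, ← hip, Category.assoc, h0, comp_zero]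

lemma thickClos_map (ℓ : PE ⥤ P) [ℓ.CommShift ℤ] [ℓ.IsTriangulated]
    (S : PE → Prop) (S' : P → Prop) (hS : ∀ W, S W → S' (ℓ.obj W)) {W : PE}
    (h : ThickClos S W) : ThickClos S' (ℓ.obj W) := by
  induction h with
  | of X hX => exact ThickClos.of _ (hS X hX)
  | zero X hX => exact ThickClos.zero _ (ℓ.map_isZero hX)
  | shift X n _ ih =>
      exact thickClos_iso S' ((ℓ.commShiftIso n).app X).symm
        (ThickClos.shift _ n ih)
  | ext A E B f g h hT _ _ ihA ihB =>
      exact ThickClos.ext _ _ _ (ℓ.map f) (ℓ.map g)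
        (ℓ.map h ≫ (ℓ.commShiftIso (1 : ℤ)).hom.app A)
        (ℓ.map_distinguished _ hT) ihA ihB
  | retract X Z i p hip _ ih =>
      exact ThickClos.retract _ _ (ℓ.map i) (ℓ.map p)
        (by rw [← ℓ.map_comp, hip, ℓ.map_id]) ih

lemma thickClos_reflect (ℓ : PE ⥤ P) [ℓ.CommShift ℤ] [ℓ.IsTriangulated]
    [ℓ.Full] [ℓ.Faithful] (V : P → Prop) (hV : IsThick V)
    (horth : ∀ Z : P, EssIm ℓ Z ↔ ∀ Y : P, V Y → ∀ f : Z ⟶ Y, f = 0)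
    (S : PE → Prop) (S' : P → Prop)
    (hS' : ∀ Z, S' Z → ∃ W, S W ∧ Nonempty (ℓ.obj W ≅ Z))
    (hSperp : ∀ Z, S' Z → ∀ v : P, V v → ∀ f : Z ⟶ v, f = 0)
    {Z : P} (h : ThickClos S' Z) :
    ∃ W : PE, ThickClos S W ∧ Nonempty (ℓ.obj W ≅ Z) := by
  induction h with
  | of X hX =>
      obtain ⟨W, hW, e⟩ := hS' X hX
      exact ⟨W, ThickClos.of _ hW, e⟩
  | zero X hX =>
      exact ⟨0, ThickClos.zero _ (isZero_zero PE),
        ⟨(ℓ.map_isZero (isZero_zero PE)).iso hX⟩⟩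
  | shift X n _ ih =>
      obtain ⟨W, hW, ⟨e⟩⟩ := ih
      exact ⟨W⟦n⟧, ThickClos.shift _ n hW,
        ⟨(ℓ.commShiftIso n).app W ≪≫ (shiftFunctor P n).mapIso e⟩⟩
  | ext A E B f g h hT hA hB ihA ihB =>
      obtain ⟨WA, hWA, ⟨eA⟩⟩ := ihA
      obtain ⟨WB, hWB, ⟨eB⟩⟩ := ihB
      have hE : ∀ v : P, V v → ∀ φ : E ⟶ v, φ = 0 :=
        perp_of_thickClos V hV S' hSperp (ThickClos.ext A E B f g h hT hA hB)
      obtain ⟨WE, ⟨eE⟩⟩ := (horth E).2 hE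
      set f' : WA ⟶ WE := ℓ.preimage (eA.hom ≫ f ≫ eE.inv) with hf'
      obtain ⟨C, g', h', hT'⟩ := Pretriangulated.distinguished_cocone_triangle f'
      have comm : ℓ.map f' ≫ eE.hom = eA.hom ≫ f := by
        rw [hf', ℓ.map_preimage]; simp
      have ti := Pretriangulated.isoTriangleOfIso₁₂
        (ℓ.mapTriangle.obj (Triangle.mk f' g' h')) (Triangle.mk f g h)
        (ℓ.map_distinguished _ hT') hT eA eE comm
      have eC : ℓ.obj C ≅ B := Triangle.π₃.mapIso ti
      have hC : ThickClos S C :=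
        thickClos_iso S (ℓ.preimageIso (eC ≪≫ eB.symm)).symm hWB
      exact ⟨WE, ThickClos.ext WA WE C f' g' h' hT' hWA hC, ⟨eE⟩⟩
  | retract X Z i p hip hZ ih =>
      obtain ⟨WZ, hWZ, ⟨eZ⟩⟩ := ih
      have hX : ∀ v : P, V v → ∀ φ : X ⟶ v, φ = 0 :=
        perp_of_thickClos V hV S' hSperp (ThickClos.retract X Z i p hip hZ)
      obtain ⟨WX, ⟨eX⟩⟩ := (horth X).2 hX
      refine ⟨WX, ThickClos.retract WX WZ (ℓ.preimage (eX.hom ≫ i ≫ eZ.inv))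
        (ℓ.preimage (eZ.hom ≫ p ≫ eX.inv)) ?_ hWZ, ⟨eX⟩⟩
      apply ℓ.map_injective
      rw [ℓ.map_comp, ℓ.map_preimage, ℓ.map_preimage, ℓ.map_id]
      simp [reassoc_of% hip]

end Aux18

/-- There is a canonical bijection between silting objects
of `per(eΓe)` and `V`-perpendicular partial silting objects of `per(Γ)`,
where `V = pvd(Γ_I)`: the fully faithful functor `ℓ` sends silting objects of
`per(eΓe)` to partial silting objects `X` of `per(Γ)` with `Hom(X, V) = 0`
and `thick(X) = ^⊥V`, and every such partial silting object arises this way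
(uniquely, `ℓ` being fully faithful). -/
theorem statement18
    {P : Type u} [Category.{v} P] [Preadditive P] [HasZeroObject P] [HasShift P ℤ]
    [∀ n : ℤ, (shiftFunctor P n).Additive] [Pretriangulated P] [HasBinaryBiproducts P]
    {PE : Type u₁} [Category.{v₁} PE] [Preadditive PE] [HasZeroObject PE] [HasShift PE ℤ]
    [∀ n : ℤ, (shiftFunctor PE n).Additive] [Pretriangulated PE] [HasBinaryBiproducts PE]
    (ℓ : PE ⥤ P) [ℓ.CommShift ℤ] [ℓ.IsTriangulated] [ℓ.Full] [ℓ.Faithful]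
    (V : P → Prop) (hV : IsThick V)
    (horth : ∀ Z : P, EssIm ℓ Z ↔ ∀ Y : P, V Y → ∀ f : Z ⟶ Y, f = 0)
    {m : ℕ} :
    (∀ Y : Fin m → PE, IsSiltingFam Y →
      (IsPartialSiltingFam (fun i => ℓ.obj (Y i)) ∧
       (∀ (i : Fin m) (v : P), V v → ∀ f : ℓ.obj (Y i) ⟶ v, f = 0) ∧
       (∀ Z : P, ThickClos (fun W => ∃ i, W = ℓ.obj (Y i)) Z ↔
         ∀ v : P, V v → ∀ f : Z ⟶ v, f = 0))) ∧
    (∀ X : Fin m → P,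
      (IsPartialSiltingFam X ∧
       (∀ (i : Fin m) (v : P), V v → ∀ f : X i ⟶ v, f = 0) ∧
       (∀ Z : P, ThickClos (fun W => ∃ i, W = X i) Z ↔
         ∀ v : P, V v → ∀ f : Z ⟶ v, f = 0)) →
      ∃ Y : Fin m → PE, IsSiltingFam Y ∧ ∀ i, Nonempty (ℓ.obj (Y i) ≅ X i)) ∧
    (∀ Y Y' : Fin m → PE, IsSiltingFam Y → IsSiltingFam Y' →
      (∀ i, Nonempty (ℓ.obj (Y i) ≅ ℓ.obj (Y' i))) → ∀ i, Nonempty (Y i ≅ Y' i)) := by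
  refine ⟨?_, ?_, ?_⟩
  · -- (1) image of a silting family is a V-perpendicular partial silting family
    intro Y hY
    have perpImg : ∀ i (v : P), V v → ∀ f : ℓ.obj (Y i) ⟶ v, f = 0 :=
      fun i => (horth (ℓ.obj (Y i))).1 ⟨Y i, ⟨Iso.refl _⟩⟩
    refine ⟨⟨?_, ?_, ?_⟩, perpImg, ?_⟩
    · -- indecomposability of the images
      intro i
      refine ⟨fun h => (hY.1.indec i).1 (isZero_of_map_isZero ℓ h), ?_⟩
      intro A B e
      -- A and B are retracts of `ℓ.obj (Y i)`, hence perpendicular to V, hence in the image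
      have hA : ∀ v : P, V v → ∀ f : A ⟶ v, f = 0 := by
        intro v hv f
        have h0 : (e.hom ≫ biprod.fst) ≫ f = 0 := perpImg i v hv _
        calc f = (biprod.inl ≫ e.inv) ≫ (e.hom ≫ biprod.fst) ≫ f := by simp
        _ = 0 := by rw [h0, comp_zero]
      have hB : ∀ v : P, V v → ∀ f : B ⟶ v, f = 0 := by
        intro v hv f
        have h0 : (e.hom ≫ biprod.snd) ≫ f = 0 := perpImg i v hv _
        calc f = (biprod.inr ≫ e.inv) ≫ (e.hom ≫ biprod.snd) ≫ f := by simp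
        _ = 0 := by rw [h0, comp_zero]
      obtain ⟨A', ⟨eA⟩⟩ := (horth A).2 hA
      obtain ⟨B', ⟨eB⟩⟩ := (horth B).2 hB
      have e' : Y i ≅ A' ⊞ B' := ℓ.preimageIso
        (e ≪≫ biprod.mapIso eA.symm eB.symm ≪≫ (mapBiprodIso ℓ A' B').symm)
      rcases (hY.1.indec i).2 A' B' e' with h | h
      · exact Or.inl ((ℓ.map_isZero h).of_iso eA.symm)
      · exact Or.inr ((ℓ.map_isZero h).of_iso eB.symm)
    · -- pairwise non-isomorphic
      intro i j hij
      exact ⟨fun e => (hY.1.pairwise_noniso i j hij).false (ℓ.preimageIso e)⟩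
    · -- no positive self-extensions
      intro i j n hn f
      have h0 : f ≫ ((ℓ.commShiftIso n).app (Y j)).inv = 0 := by
        have hz : ℓ.preimage (f ≫ ((ℓ.commShiftIso n).app (Y j)).inv) = 0 :=
          hY.1.no_pos_ext i j n hn _
        rw [← ℓ.map_preimage (f ≫ ((ℓ.commShiftIso n).app (Y j)).inv), hz, ℓ.map_zero]
      rw [← cancel_mono (((ℓ.commShiftIso n).app (Y j)).inv), h0, zero_comp]
    · -- thick closure is the perpendicular of V
      intro Z
      constructor
      · intro h
        refine perp_of_thickClos V hV _ ?_ h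
        rintro s ⟨i, rfl⟩
        exact perpImg i
      · intro hp
        obtain ⟨W, ⟨e⟩⟩ := (horth Z).2 hp
        refine thickClos_iso _ e (thickClos_map ℓ (fun Z => ∃ i, Z = Y i) _ ?_ (hY.2 W))
        rintro W' ⟨i, rfl⟩
        exact ⟨i, rfl⟩
  · -- (2) every V-perpendicular partial silting family comes from a silting family
    rintro X ⟨hps, hperp, hthick⟩
    have hEss : ∀ i, ∃ W : PE, Nonempty (ℓ.obj W ≅ X i) :=
      fun i => (horth (X i)).2 (hperp i)
    choose Y e using hEss
    have ei : ∀ i, ℓ.obj (Y i) ≅ X i := fun i => (e i).some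
    refine ⟨Y, ⟨⟨?_, ?_, ?_⟩, ?_⟩, fun i => ⟨ei i⟩⟩
    · -- indecomposability
      intro i
      constructor
      · intro h
        exact (hps.indec i).1 ((ℓ.map_isZero h).of_iso (ei i).symm)
      · intro A B eAB
        have e' : X i ≅ ℓ.obj A ⊞ ℓ.obj B :=
          (ei i).symm ≪≫ ℓ.mapIso eAB ≪≫ mapBiprodIso ℓ A B
        rcases (hps.indec i).2 (ℓ.obj A) (ℓ.obj B) e' with h | h
        · exact Or.inl (isZero_of_map_isZero ℓ h)
        · exact Or.inr (isZero_of_map_isZero ℓ h)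
    · -- pairwise non-isomorphic
      intro i j hij
      refine ⟨fun e' => (hps.pairwise_noniso i j hij).false ?_⟩
      exact (ei i).symm ≪≫ ℓ.mapIso e' ≪≫ ei j
    · -- no positive self-extensions
      intro i j n hn f
      apply ℓ.map_injective
      rw [ℓ.map_zero]
      have h0 := hps.no_pos_ext i j n hn ((ei i).inv ≫ ℓ.map f ≫
        ((ℓ.commShiftIso n).app (Y j)).hom ≫ (shiftFunctor P n).map (ei j).hom)
      rw [← cancel_epi (ei i).inv,
        ← cancel_mono (((ℓ.commShiftIso n).app (Y j)).hom ≫ (shiftFunctor P n).map (ei j).hom)]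
      simpa using h0
    · -- generation
      intro W
      have hp : ∀ v : P, V v → ∀ f : ℓ.obj W ⟶ v, f = 0 :=
        (horth (ℓ.obj W)).1 ⟨W, ⟨Iso.refl _⟩⟩
      have hth : ThickClos (fun W' => ∃ i, W' = X i) (ℓ.obj W) :=
        (hthick (ℓ.obj W)).2 hp
      obtain ⟨W', hW', ⟨e'⟩⟩ := thickClos_reflect ℓ V hV horth
        (fun Z => ∃ i, Z = Y i) _
        (by rintro Z ⟨i, rfl⟩; exact ⟨Y i, ⟨i, rfl⟩, ⟨ei i⟩⟩)
        (by rintro Z ⟨i, rfl⟩; exact hperp i) hth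
      exact thickClos_iso _ (ℓ.preimageIso e') hW'
  · -- (3) uniqueness: ℓ is fully faithful
    intro Y Y' _ _ hiso i
    obtain ⟨e⟩ := hiso i
    exact ⟨ℓ.preimageIso e⟩
end
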